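/- arXiv:2010.10497 — 5 statements merged into one kernel-verified Lean document; each statement's English description precedes it below -/
import Mathlib

section
/- Let X and Y be Banach spaces such that the closed unit ball of X* is sequentially weak* compact, and let s > 0. Suppose T : X* → Y* satisfies: (A1) T is sequentially weak*-to-weak* continuous (if u_k converges weak* to u in X*, then T u_k converges weak* to T u in Y*); (A2) T(a u) = a^s T(u) for all a > 0 and all u ∈ X*; (A3) there exist sequences of linear isometric isomorphisms σ_k^{X*} : X* → X* and σ_k^{Y*} : Y* → Y* (k ∈ ℕ) such that T ∘ σ_k^{X*} = σ_k^{Y*} ∘ T for all k, and σ_k^{Y*} f converges weak* to 0 for every f ∈ Y*. Then the following are equivalent: (1) T(X*) is non-meagre in Y*; (2) T(X*) = Y*; (3) T is open at the origin, i.e. for every ε > 0 there is δ > 0 such that every f ∈ Y* with ‖f‖_{Y*} ≤ δ equals T u for some u ∈ X* with ‖u‖_{X*} ≤ ε; (4) there is a constant C > 0 such that for every f ∈ Y* there exists u ∈ X* with T u = f and ‖u‖_{X*}^s ≤ C ‖f‖_{Y*}. -/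
open MeasureTheory Filter Topology

/-- A sequence in a dual space converges weak-star. -/
def WeakStarTendsto {X : Type*} [NormedAddCommGroup X] [NormedSpace ℝ X]
    (u : ℕ → StrongDual ℝ X) (u₀ : StrongDual ℝ X) : Prop :=
  ∀ x : X, Tendsto (fun k => u k x) atTop (𝓝 (u₀ x))

/-- Weak-star lower semicontinuity of the norm. -/
lemma dual_norm_le_of_weakStarTendsto {X : Type*} [NormedAddCommGroup X] [NormedSpace ℝ X]
    {u : ℕ → StrongDual ℝ X} {u₀ : StrongDual ℝ X} {c : ℝ} (hc : 0 ≤ c)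
    (h : ∀ k, ‖u k‖ ≤ c) (ht : WeakStarTendsto u u₀) : ‖u₀‖ ≤ c := by
  refine ContinuousLinearMap.opNorm_le_bound _ hc fun x => ?_
  refine le_of_tendsto (ht x).norm (Filter.Eventually.of_forall fun k => ?_)
  exact ((u k).le_opNorm x).trans (mul_le_mul_of_nonneg_right (h k) (norm_nonneg x))

set_option maxHeartbeats 1000000 in
set_option synthInstance.maxHeartbeats 400000 in
/-- **Nonlinear open mapping principle** (Theorem A / Theorem 2.1). -/
theorem nonlinear_open_mapping_principle
    (X Y : Type*) [NormedAddCommGroup X] [NormedSpace ℝ X] [CompleteSpace X]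
    [NormedAddCommGroup Y] [NormedSpace ℝ Y] [CompleteSpace Y]
    (hball : ∀ u : ℕ → StrongDual ℝ X, (∀ k, ‖u k‖ ≤ 1) →
      ∃ (u₀ : StrongDual ℝ X) (φ : ℕ → ℕ), StrictMono φ ∧
        WeakStarTendsto (u ∘ φ) u₀)
    (s : ℝ) (hs : 0 < s)
    (T : StrongDual ℝ X → StrongDual ℝ Y)
    -- (A1) sequential weak*-to-weak* continuity
    (hA1 : ∀ (u : ℕ → StrongDual ℝ X) (u₀ : StrongDual ℝ X),
      WeakStarTendsto u u₀ →
      ∀ y : Y, Tendsto (fun k => T (u k) y) atTop (𝓝 (T u₀ y)))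
    -- (A2) positive s-homogeneity
    (hA2 : ∀ a : ℝ, 0 < a → ∀ u, T (a • u) = a ^ s • T u)
    -- (A3) generalized translation invariance
    (hA3 : ∃ (σX : ℕ → StrongDual ℝ X ≃ₗᵢ[ℝ] StrongDual ℝ X)
             (σY : ℕ → StrongDual ℝ Y ≃ₗᵢ[ℝ] StrongDual ℝ Y),
      (∀ k u, T (σX k u) = σY k (T u)) ∧
      (∀ f : StrongDual ℝ Y, ∀ y : Y,
        Tendsto (fun k => σY k f y) atTop (𝓝 0))) :
    List.TFAE
      [ ¬ IsMeagre (Set.range T),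
        Function.Surjective T,
        ∀ ε > 0, ∃ δ > 0, ∀ f : StrongDual ℝ Y, ‖f‖ ≤ δ →
          ∃ u, T u = f ∧ ‖u‖ ≤ ε,
        ∃ C > 0, ∀ f : StrongDual ℝ Y,
          ∃ u, T u = f ∧ ‖u‖ ^ s ≤ C * ‖f‖ ] := by
  obtain ⟨σX, σY, hcomm, hzero⟩ := hA3
  -- `T 0 = 0`
  have hT0 : T 0 = 0 := by
    have h2 := hA2 2 (by norm_num) 0
    rw [smul_zero] at h2
    have h2s : (1 : ℝ) < 2 ^ s := (Real.one_lt_rpow_iff_of_pos (by norm_num)).mpr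
      (Or.inl ⟨by norm_num, hs⟩)
    ext y
    have hy := congrArg (fun g : StrongDual ℝ Y => g y) h2
    simp only [ContinuousLinearMap.smul_apply, smul_eq_mul] at hy
    have : ((2 : ℝ) ^ s - 1) * T 0 y = 0 := by linarith [hy]
    have hz := (mul_eq_zero.mp this).resolve_left (by intro h; linarith)
    simpa using hz
  -- sequential weak* compactness of balls of any radius, with the norm bound on the limit
  have key : ∀ c : ℝ, 0 < c → ∀ v : ℕ → StrongDual ℝ X, (∀ k, ‖v k‖ ≤ c) →
      ∃ v₀ : StrongDual ℝ X, ‖v₀‖ ≤ c ∧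
        ∃ φ : ℕ → ℕ, StrictMono φ ∧ WeakStarTendsto (v ∘ φ) v₀ := by
    intro c hc v hv
    obtain ⟨w₀, φ, hφ, hw⟩ := hball (fun k => c⁻¹ • v k) (fun k => by
      rw [norm_smul, norm_inv, Real.norm_of_nonneg hc.le]
      calc c⁻¹ * ‖v k‖ ≤ c⁻¹ * c := mul_le_mul_of_nonneg_left (hv k) (by positivity)
        _ = 1 := inv_mul_cancel₀ hc.ne')
    have ht : WeakStarTendsto (v ∘ φ) (c • w₀) := by
      intro x
      have hx := hw x
      have := hx.const_mul c
      simp only [Function.comp_apply, ContinuousLinearMap.smul_apply, smul_eq_mul,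
        ← mul_assoc, mul_inv_cancel₀ hc.ne', one_mul] at this ⊢
      exact this
    refine ⟨c • w₀, ?_, φ, hφ, ht⟩
    exact dual_norm_le_of_weakStarTendsto hc.le (fun k => hv (φ k)) ht
  -- the image of each closed ball is closed
  have hEclosed : ∀ c : ℝ, 0 < c → IsClosed (T '' Metric.closedBall 0 c) := by
    intro c hc
    apply IsSeqClosed.isClosed
    intro f f₀ hf hlim
    choose v hv hTv using hf
    simp only [Metric.mem_closedBall, dist_zero_right] at hv
    obtain ⟨v₀, hv₀, φ, hφ, hw⟩ := key c hc v hv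
    refine ⟨v₀, by simpa [Metric.mem_closedBall, dist_zero_right] using hv₀, ?_⟩
    ext y
    have h1 := hA1 (v ∘ φ) v₀ hw y
    have h2 : Tendsto (fun k => T (v (φ k)) y) atTop (𝓝 (f₀ y)) := by
      have hfy : Tendsto (fun k => f (φ k) y) atTop (𝓝 (f₀ y)) := by
        have hsub : Tendsto (f ∘ φ) atTop (𝓝 f₀) := hlim.comp hφ.tendsto_atTop
        exact ((ContinuousLinearMap.apply ℝ ℝ y).continuous.tendsto f₀).comp hsub
      simpa only [hTv] using hfy
    exact tendsto_nhds_unique h1 h2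
  tfae_have 1 → 3 := by
    intro h1
    -- find a ball whose image is non-meagre
    have hcover : Set.range T = ⋃ n : ℕ, T '' Metric.closedBall 0 ((n : ℝ) + 1) := by
      ext f
      simp only [Set.mem_range, Set.mem_iUnion, Set.mem_image, Metric.mem_closedBall,
        dist_zero_right]
      constructor
      · rintro ⟨u, rfl⟩
        exact ⟨⌈‖u‖⌉₊, u, (Nat.le_ceil _).trans (by linarith [Nat.le_succ ⌈‖u‖⌉₊]), rfl⟩
      · rintro ⟨n, u, _, rfl⟩
        exact ⟨u, rfl⟩
    have hex : ∃ n : ℕ, ¬ IsMeagre (T '' Metric.closedBall 0 ((n : ℝ) + 1)) := by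
      by_contra hcon
      push_neg at hcon
      exact h1 (hcover ▸ isMeagre_iUnion fun n => hcon n)
    obtain ⟨n, hn⟩ := hex
    set c : ℝ := (n : ℝ) + 1 with hcdef
    have hc : 0 < c := by positivity
    set E := T '' Metric.closedBall 0 c with hEdef
    have hEcl : IsClosed E := hEclosed c hc
    have hint : (interior E).Nonempty := by
      by_contra hco
      rw [Set.not_nonempty_iff_eq_empty] at hco
      apply hn
      have hnd : IsNowhereDense E := hEcl.isNowhereDense_iff.mpr hco
      obtain ⟨ho, hd⟩ := isClosed_isNowhereDense_iff_compl.mp ⟨hEcl, hnd⟩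
      exact residual_of_dense_open ho hd
    obtain ⟨f₀, hf₀⟩ := hint
    obtain ⟨ε₀, hε₀, hsub⟩ := Metric.mem_nhds_iff.mp (mem_interior_iff_mem_nhds.mp hf₀)
    set δ := ε₀ / 2 with hδdef
    have hδ : 0 < δ := by positivity
    have hδsub : Metric.closedBall f₀ δ ⊆ E :=
      (Metric.closedBall_subset_ball (by simp [hδdef]; linarith)).trans hsub
    -- every g with ‖g‖ ≤ δ lies in E
    have hball0 : ∀ g : StrongDual ℝ Y, ‖g‖ ≤ δ → g ∈ E := by
      intro g hg
      have hwk : ∀ k : ℕ, ∃ w, ‖w‖ ≤ c ∧ T w = σY k f₀ + g := by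
        intro k
        have hmem : f₀ + (σY k).symm g ∈ E := by
          apply hδsub
          simp only [Metric.mem_closedBall, dist_eq_norm, add_sub_cancel_left]
          rwa [(σY k).symm.norm_map]
        obtain ⟨u, hu, hTu⟩ := hmem
        simp only [Metric.mem_closedBall, dist_zero_right] at hu
        refine ⟨σX k u, by rw [(σX k).norm_map]; exact hu, ?_⟩
        rw [hcomm, hTu, map_add, (σY k).apply_symm_apply]
      choose w hwle hTw using hwk
      obtain ⟨w₀, hw₀, φ, hφ, hconv⟩ := key c hc w hwle
      refine ⟨w₀, by simpa [Metric.mem_closedBall, dist_zero_right] using hw₀, ?_⟩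
      ext y
      have h1 := hA1 (w ∘ φ) w₀ hconv y
      have h2 : Tendsto (fun k => T (w (φ k)) y) atTop (𝓝 (g y)) := by
        simp only [hTw, ContinuousLinearMap.add_apply]
        have hz := (hzero f₀ y).comp hφ.tendsto_atTop
        have := hz.add (tendsto_const_nhds (x := g y))
        simpa using this
      exact tendsto_nhds_unique h1 h2
    -- scale
    intro ε hε
    set a := ε / c with hadef
    have ha : 0 < a := div_pos hε hc
    set b := a ^ s with hbdef
    have hb : 0 < b := Real.rpow_pos_of_pos ha s
    refine ⟨b * δ, by positivity, fun f hf => ?_⟩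
    have hg : ‖b⁻¹ • f‖ ≤ δ := by
      rw [norm_smul, norm_inv, Real.norm_of_nonneg hb.le]
      calc b⁻¹ * ‖f‖ ≤ b⁻¹ * (b * δ) := mul_le_mul_of_nonneg_left hf (by positivity)
        _ = δ := by field_simp
    obtain ⟨u, hu, hTu⟩ := hball0 _ hg
    simp only [Metric.mem_closedBall, dist_zero_right] at hu
    refine ⟨a • u, ?_, ?_⟩
    · rw [hA2 a ha, hTu, ← hbdef, smul_inv_smul₀ hb.ne']
    · rw [norm_smul, Real.norm_of_nonneg ha.le]
      calc a * ‖u‖ ≤ a * c := by gcongr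
        _ = ε := div_mul_cancel₀ ε hc.ne'
  tfae_have 3 → 4 := by
    intro h3
    obtain ⟨δ, hδ, h⟩ := h3 1 one_pos
    refine ⟨δ⁻¹, by positivity, fun f => ?_⟩
    by_cases hf : f = 0
    · exact ⟨0, by rw [hf]; exact hT0, by simp [hf, Real.zero_rpow hs.ne']⟩
    · have hfn : 0 < ‖f‖ := norm_pos_iff.mpr hf
      have hg : ‖(δ / ‖f‖) • f‖ ≤ δ := by
        rw [norm_smul, Real.norm_of_nonneg (by positivity), div_mul_cancel₀ _ hfn.ne']
      obtain ⟨u, hTu, hu⟩ := h _ hg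
      set b := (‖f‖ / δ) ^ s⁻¹ with hbdef
      have hbpos : 0 < b := Real.rpow_pos_of_pos (by positivity) _
      have hbs : b ^ s = ‖f‖ / δ := by
        rw [hbdef, ← Real.rpow_mul (by positivity), inv_mul_cancel₀ hs.ne', Real.rpow_one]
      refine ⟨b • u, ?_, ?_⟩
      · rw [hA2 b hbpos, hTu, hbs, smul_smul]
        have hone : ‖f‖ / δ * (δ / ‖f‖) = 1 := by field_simp
        rw [hone, one_smul]
      · rw [norm_smul, Real.norm_of_nonneg hbpos.le,
          Real.mul_rpow hbpos.le (norm_nonneg u), hbs]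
        have h1 : ‖u‖ ^ s ≤ 1 := Real.rpow_le_one (norm_nonneg u) hu hs.le
        calc ‖f‖ / δ * ‖u‖ ^ s ≤ ‖f‖ / δ * 1 := by gcongr
          _ = δ⁻¹ * ‖f‖ := by ring
  tfae_have 4 → 2 := by
    rintro ⟨C, _, h⟩ f
    obtain ⟨u, hu, -⟩ := h f
    exact ⟨u, hu⟩
  tfae_have 2 → 1 := by
    intro h2 hm
    have hbaire : BaireSpace (StrongDual ℝ Y) := inferInstance
    rw [Set.range_eq_univ.mpr h2] at hm
    have hd : Dense (∅ : Set (StrongDual ℝ Y)) := by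
      have := dense_of_mem_residual (by simpa [IsMeagre, Set.compl_univ] using hm)
      simpa using this
    exact Set.not_nonempty_empty hd.nonempty
  tfae_finish
end

section
/- Let X and Z be Banach spaces and I an index set. For each i ∈ I let T_i : X → Z be a map and assume: (1) for every i ∈ I the function u ↦ ‖T_i u‖_Z is weakly sequentially lower semicontinuous on X (if u_k converges weakly to u then ‖T_i u‖_Z ≤ liminf_k ‖T_i u_k‖_Z); (2) there is ε > 0 such that sup_{i ∈ I} ‖T_i u‖_Z < ∞ whenever ‖u‖_X ≤ ε; (3) there are sequences of linear isometric isomorphisms σ_k^X : X → X and σ_k^Z : Z → Z (k ∈ ℕ) such that T_i ∘ σ_k^X = σ_k^Z ∘ T_i for all i ∈ I and k ∈ ℕ, and σ_k^X u converges weakly to 0 for every u ∈ X. Then there exists δ > 0 such that sup over all u with ‖u‖_X ≤ δ of sup_{i ∈ I} ‖T_i u‖_Z is finite. -/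
open Filter Topology

/-- Weak convergence of a sequence in a normed space. -/
def WeakTendsto {X : Type*} [NormedAddCommGroup X] [NormedSpace ℝ X]
    (u : ℕ → X) (u₀ : X) : Prop :=
  ∀ φ : StrongDual ℝ X, Tendsto (fun k => φ (u k)) atTop (𝓝 (φ u₀))

/-- **A nonlinear uniform boundedness principle** (Proposition 2.3). -/
theorem nonlinear_uniform_boundedness
    (X Z : Type*) [NormedAddCommGroup X] [NormedSpace ℝ X] [CompleteSpace X]
    [NormedAddCommGroup Z] [NormedSpace ℝ Z] [CompleteSpace Z]
    (I : Type*) (T : I → X → Z)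
    -- (1) weak sequential lower semicontinuity of `u ↦ ‖T_i u‖`
    (h1 : ∀ (i : I) (u : ℕ → X) (u₀ : X), WeakTendsto u u₀ →
      ‖T i u₀‖ ≤ atTop.liminf fun k => ‖T i (u k)‖)
    -- (2) pointwise boundedness near the origin
    (h2 : ∃ ε > (0 : ℝ), ∀ u : X, ‖u‖ ≤ ε → ∃ C : ℝ, ∀ i : I, ‖T i u‖ ≤ C)
    -- (3) commuting isometries under which every orbit is weakly null
    (h3 : ∃ (σX : ℕ → X ≃ₗᵢ[ℝ] X) (σZ : ℕ → Z ≃ₗᵢ[ℝ] Z),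
      (∀ (i : I) (k : ℕ) (u : X), T i (σX k u) = σZ k (T i u)) ∧
      (∀ u : X, WeakTendsto (fun k => σX k u) 0)) :
    ∃ δ > (0 : ℝ), ∃ C : ℝ, ∀ u : X, ‖u‖ ≤ δ → ∀ i : I, ‖T i u‖ ≤ C := by
  obtain ⟨ε, hε, h2⟩ := h2
  obtain ⟨σX, σZ, hcomm, hweak⟩ := h3
  -- a helper: liminf of a sequence bounded above by m (and below by 0) is ≤ m
  have liminf_le : ∀ (g : ℕ → ℝ) (m : ℝ), (∀ k, g k ≤ m) → (∀ k, 0 ≤ g k) →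
      atTop.liminf g ≤ m := by
    intro g m hm h0
    refine Filter.liminf_le_of_le ⟨0, Filter.eventually_map.mpr ?_⟩ ?_
    · exact Filter.Eventually.of_forall h0
    · intro b hb
      obtain ⟨k, hk⟩ := hb.exists
      exact hk.trans (hm k)
  -- the closed sets
  set F : ℕ → Set X := fun m => {u | ‖u‖ ≤ ε ∧ ∀ i, ‖T i u‖ ≤ m} with hF
  have hclosed : ∀ m, IsClosed (F m) := by
    intro m
    have hrw : F m = {u : X | ‖u‖ ≤ ε} ∩ ⋂ i, {u : X | ‖T i u‖ ≤ m} := by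
      ext u; simp [hF, Set.mem_iInter]
    rw [hrw]
    refine IsClosed.inter (isClosed_le (by continuity) continuous_const)
      (isClosed_iInter fun i => ?_)
    apply IsSeqClosed.isClosed
    intro u u₀ hu hconv
    have hw : WeakTendsto u u₀ := fun φ => (φ.continuous.tendsto u₀).comp hconv
    refine (h1 i u u₀ hw).trans (liminf_le _ _ (fun k => hu k) (fun k => norm_nonneg _))
  -- some F m has nonempty interior (Baire)
  have hint : ∃ m, (interior (F m)).Nonempty := by
    by_contra hno
    push_neg at hno
    have hmeagre : IsMeagre (⋃ m, F m) := by
      refine isMeagre_iUnion fun m => ?_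
      have : (F m)ᶜ ∈ residual X := by
        refine residual_of_dense_open (hclosed m).isOpen_compl ?_
        rw [← interior_eq_empty_iff_dense_compl]
        simpa using hno m
      exact this
    have hdense : Dense (⋃ m, F m)ᶜ := dense_of_mem_residual hmeagre
    obtain ⟨u, hu1, hu2⟩ := hdense.exists_mem_open Metric.isOpen_ball
      ⟨0, Metric.mem_ball_self hε⟩
    have hunorm : ‖u‖ ≤ ε := by
      have := Metric.mem_ball.mp hu2
      simp only [dist_zero_right] at this
      exact this.le
    obtain ⟨C, hC⟩ := h2 u hunorm
    have : u ∈ ⋃ m, F m := by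
      refine Set.mem_iUnion.mpr ⟨⌈max C 0⌉₊, hunorm, fun i => ?_⟩
      exact (hC i).trans ((le_max_left _ _).trans (Nat.le_ceil _))
    exact hu1 this
  obtain ⟨m, u₀, hu₀⟩ := hint
  obtain ⟨r, hr, hball⟩ := Metric.isOpen_iff.mp isOpen_interior u₀ hu₀
  -- bound on the open ball around u₀
  have hFball : ∀ v : X, ‖v - u₀‖ < r → ∀ i, ‖T i v‖ ≤ m := by
    intro v hv i
    have : v ∈ F m := interior_subset (hball (by simpa [Metric.mem_ball, dist_eq_norm] using hv))
    exact this.2 i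
  refine ⟨r / 2, by positivity, m, fun u hu i => ?_⟩
  -- translate the bound to the origin using the isometries
  set v : ℕ → X := fun k => σX k u₀ + u with hv
  have hbound : ∀ k, ‖T i (v k)‖ ≤ m := by
    intro k
    have heq : v k = σX k (u₀ + (σX k).symm u) := by
      simp [hv, map_add]
    have hnear : ‖u₀ + (σX k).symm u - u₀‖ < r := by
      have : ‖(σX k).symm u‖ = ‖u‖ := LinearIsometryEquiv.norm_map _ _
      rw [add_sub_cancel_left, this]
      linarith
    calc ‖T i (v k)‖ = ‖σZ k (T i (u₀ + (σX k).symm u))‖ := by rw [heq, hcomm]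
      _ = ‖T i (u₀ + (σX k).symm u)‖ := LinearIsometryEquiv.norm_map _ _
      _ ≤ m := hFball _ hnear i
  have hwt : WeakTendsto v u := by
    intro φ
    have h0 : Tendsto (fun k => φ (σX k u₀)) atTop (𝓝 0) := by
      have := hweak u₀ φ
      simpa using this
    have : Tendsto (fun k => φ (σX k u₀) + φ u) atTop (𝓝 (0 + φ u)) :=
      h0.add tendsto_const_nhds
    simpa [hv, map_add] using this
  exact (h1 i v u hwt).trans (liminf_le _ _ hbound (fun k => norm_nonneg _))
end

section
/- Let X and Y be Banach spaces such that the closed unit ball of X* is sequentially weak* compact, let s > 0, and let T : X* → Y* satisfy: (A1) T is sequentially weak*-to-weak* continuous; (A2) T(a u) = a^s T(u) for all a > 0 and u ∈ X*; (A3) there exist sequences of linear isometric isomorphisms σ_k^{X*} : X* → X* and σ_k^{Y*} : Y* → Y* with T ∘ σ_k^{X*} = σ_k^{Y*} ∘ T for all k and σ_k^{Y*} f converging weak* to 0 for every f ∈ Y*. For ω ∈ ℕ ∪ {∞} define Λ_ω := { Σ_{j=1}^{ω} c_j T u_j : u_j ∈ 𝔹_{X*}, c_j ∈ ℝ, Σ_{j=1}^{ω}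 |c_j| < ∞, the series converging in the norm of Y* }. If Λ_∞ is non-meagre in Y*, then there exists ω ∈ ℕ ∪ {∞} such that: Λ_ω = Y*; the union of Λ_m over natural numbers m < ω is meagre in Y*; and T is 1/ω-open, i.e. there is a constant C > 0 such that every f ∈ Y* can be written as f = Σ_{j=1}^{ω} c_j T u_j with u_j ∈ 𝔹_{X*} and Σ_{j=1}^{ω} |c_j| ≤ C ‖f‖_{Y*}. -/
open MeasureTheory Filter Topology

/-- The set `Λ_ω` of sums `Σ_{j<ω} c_j T u_j` with `u_j` in the unit ball and
`Σ |c_j| < ∞`, the series converging in norm. -/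
def Lambda {X Y : Type*} [NormedAddCommGroup X] [NormedSpace ℝ X]
    [NormedAddCommGroup Y] [NormedSpace ℝ Y]
    (T : StrongDual ℝ X → StrongDual ℝ Y) (ω : ℕ∞) :
    Set (StrongDual ℝ Y) :=
  { f | ∃ (c : ℕ → ℝ) (u : ℕ → StrongDual ℝ X),
      (∀ j, ‖u j‖ ≤ 1) ∧ (∀ j : ℕ, ω ≤ (j : ℕ∞) → c j = 0) ∧
      Summable (fun j => |c j|) ∧ HasSum (fun j => c j • T (u j)) f }

section AtomicAux

variable {X Y : Type*} [NormedAddCommGroup X] [NormedSpace ℝ X]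
  [NormedAddCommGroup Y] [NormedSpace ℝ Y]

/-- Bounded version of `Lambda`. -/
def LambdaB (T : StrongDual ℝ X → StrongDual ℝ Y) (ω : ℕ∞) (R : ℝ) :
    Set (StrongDual ℝ Y) :=
  { f | ∃ (c : ℕ → ℝ) (u : ℕ → StrongDual ℝ X),
      (∀ j, ‖u j‖ ≤ 1) ∧ (∀ j : ℕ, ω ≤ (j : ℕ∞) → c j = 0) ∧
      Summable (fun j => |c j|) ∧ HasSum (fun j => c j • T (u j)) f ∧ ∑' j, |c j| ≤ R }

variable {T : StrongDual ℝ X → StrongDual ℝ Y} {ω : ℕ∞}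

lemma LambdaB_mono {R R' : ℝ} (h : R ≤ R') : LambdaB T ω R ⊆ LambdaB T ω R' := by
  rintro f ⟨c, u, h1, h2, h3, h4, h5⟩
  exact ⟨c, u, h1, h2, h3, h4, h5.trans h⟩

lemma LambdaB_subset_Lambda {R : ℝ} : LambdaB T ω R ⊆ Lambda T ω := by
  rintro f ⟨c, u, h1, h2, h3, h4, h5⟩
  exact ⟨c, u, h1, h2, h3, h4⟩

lemma Lambda_eq_iUnion : Lambda T ω = ⋃ n : ℕ, LambdaB T ω n := by
  ext f
  constructor
  · rintro ⟨c, u, h1, h2, h3, h4⟩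
    exact Set.mem_iUnion.2 ⟨⌈∑' j, |c j|⌉₊, c, u, h1, h2, h3, h4, Nat.le_ceil _⟩
  · rw [Set.mem_iUnion]
    rintro ⟨n, hn⟩
    exact LambdaB_subset_Lambda hn

lemma exists_nonmeagre_LambdaB (h : ¬ IsMeagre (Lambda T ω)) :
    ∃ n : ℕ, 0 < n ∧ ¬ IsMeagre (LambdaB T ω n) := by
  by_contra hc
  push_neg at hc
  apply h
  rw [Lambda_eq_iUnion]
  apply isMeagre_iUnion
  intro n
  have := hc (n + 1) (Nat.succ_pos n)
  exact this.mono (LambdaB_mono (by exact_mod_cast Nat.le_succ n))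

lemma smul_mem_LambdaB {R : ℝ} {f : StrongDual ℝ Y} (a : ℝ)
    (hf : f ∈ LambdaB T ω R) : a • f ∈ LambdaB T ω (|a| * R) := by
  obtain ⟨c, u, h1, h2, h3, h4, h5⟩ := hf
  refine ⟨fun j => a * c j, u, h1, fun j hj => by simp only []; rw [h2 j hj, mul_zero], ?_, ?_, ?_⟩
  · simpa [abs_mul] using h3.mul_left |a|
  · have := h4.const_smul a
    convert this using 2 with j
    rw [smul_smul]
  · calc ∑' j, |a * c j| = |a| * ∑' j, |c j| := by
          simp_rw [abs_mul]; exact tsum_mul_left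
      _ ≤ |a| * R := by
          apply mul_le_mul_of_nonneg_left h5 (abs_nonneg a)


lemma hasSum_eval {F : ℕ → StrongDual ℝ Y} {f : StrongDual ℝ Y}
    (h : HasSum F f) (y : Y) : HasSum (fun j => F j y) (f y) :=
  (ContinuousLinearMap.apply ℝ ℝ y).hasSum h

lemma norm_le_one_of_weakstar {v : ℕ → StrongDual ℝ X} {u₀ : StrongDual ℝ X}
    (hv : ∀ k, ‖v k‖ ≤ 1) (h : WeakStarTendsto v u₀) : ‖u₀‖ ≤ 1 := by
  apply ContinuousLinearMap.opNorm_le_bound _ zero_le_one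
  intro x
  refine le_of_tendsto (h x).norm (Filter.Eventually.of_forall fun k => ?_)
  calc ‖v k x‖ ≤ ‖v k‖ * ‖x‖ := (v k).le_opNorm x
    _ ≤ 1 * ‖x‖ := mul_le_mul_of_nonneg_right (hv k) (norm_nonneg x)

lemma exists_T_bound
    (hball : ∀ u : ℕ → StrongDual ℝ X, (∀ k, ‖u k‖ ≤ 1) →
      ∃ (u₀ : StrongDual ℝ X) (φ : ℕ → ℕ), StrictMono φ ∧
        WeakStarTendsto (u ∘ φ) u₀)
    (hA1 : ∀ (u : ℕ → StrongDual ℝ X) (u₀ : StrongDual ℝ X),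
      WeakStarTendsto u u₀ →
      ∀ y : Y, Tendsto (fun k => T (u k) y) atTop (𝓝 (T u₀ y)))
    [CompleteSpace Y] :
    ∃ M : ℝ, 0 < M ∧ ∀ u : StrongDual ℝ X, ‖u‖ ≤ 1 → ‖T u‖ ≤ M := by
  have hpt : ∀ y : Y, ∃ C, ∀ i : {u : StrongDual ℝ X // ‖u‖ ≤ 1}, ‖T i.1 y‖ ≤ C := by
    intro y
    by_contra hc
    push_neg at hc
    have hex : ∀ k : ℕ, ∃ u : StrongDual ℝ X, ‖u‖ ≤ 1 ∧ (k : ℝ) < ‖T u y‖ := by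
      intro k
      obtain ⟨i, hi⟩ := hc (k : ℝ)
      exact ⟨i.1, i.2, hi⟩
    choose v hv1 hv2 using hex
    obtain ⟨u₀, φ, hφ, hw⟩ := hball v hv1
    have h1 : Tendsto (fun k => ‖T (v (φ k)) y‖) atTop (𝓝 ‖T u₀ y‖) :=
      (hA1 (v ∘ φ) u₀ hw y).norm
    have h2 : Tendsto (fun k => ‖T (v (φ k)) y‖) atTop atTop := by
      apply tendsto_atTop_mono (fun k => ?_) tendsto_natCast_atTop_atTop
      calc (k : ℝ) ≤ (φ k : ℝ) := by exact_mod_cast hφ.le_apply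
        _ ≤ ‖T (v (φ k)) y‖ := (hv2 (φ k)).le
    exact not_tendsto_atTop_of_tendsto_nhds h1 h2
  obtain ⟨C', hC'⟩ := banach_steinhaus (g := fun i : {u : StrongDual ℝ X // ‖u‖ ≤ 1} =>
    (T i.1 : Y →L[ℝ] ℝ)) hpt
  refine ⟨max C' 1, lt_of_lt_of_le one_pos (le_max_right _ _), fun u hu => ?_⟩
  exact le_trans (hC' ⟨u, hu⟩) (le_max_left _ _)

lemma sigma_mem_LambdaB {R : ℝ}
    (σX : StrongDual ℝ X ≃ₗᵢ[ℝ] StrongDual ℝ X)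
    (σY : StrongDual ℝ Y ≃ₗᵢ[ℝ] StrongDual ℝ Y)
    (hcomm : ∀ u, T (σX u) = σY (T u)) {f : StrongDual ℝ Y}
    (hf : f ∈ LambdaB T ω R) : σY f ∈ LambdaB T ω R := by
  obtain ⟨c, u, h1, h2, h3, h4, h5⟩ := hf
  refine ⟨c, fun j => σX (u j), fun j => by rw [σX.norm_map]; exact h1 j, h2, h3, ?_, h5⟩
  have h6 := (σY.toContinuousLinearEquiv.toContinuousLinearMap).hasSum h4
  have h7 : (fun j => c j • T (σX (u j))) = fun j => σY (c j • T (u j)) := by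
    funext j
    rw [hcomm, LinearIsometryEquiv.map_smul]
  rw [h7]
  exact h6


lemma extract_subseq
    (hball : ∀ u : ℕ → StrongDual ℝ X, (∀ k, ‖u k‖ ≤ 1) →
      ∃ (u₀ : StrongDual ℝ X) (φ : ℕ → ℕ), StrictMono φ ∧
        WeakStarTendsto (u ∘ φ) u₀)
    (m : ℕ) {R : ℝ} (c : ℕ → ℕ → ℝ) (u : ℕ → ℕ → StrongDual ℝ X)
    (hc : ∀ k j, |c k j| ≤ R) (hu : ∀ k j, ‖u k j‖ ≤ 1) :
    ∃ φ : ℕ → ℕ, StrictMono φ ∧ ∃ (c₀ : ℕ → ℝ) (u₀ : ℕ → StrongDual ℝ X),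
      (∀ j, ‖u₀ j‖ ≤ 1) ∧
      ∀ j < m, Tendsto (fun k => c (φ k) j) atTop (𝓝 (c₀ j)) ∧
        WeakStarTendsto (fun k => u (φ k) j) (u₀ j) := by
  induction m with
  | zero =>
    exact ⟨id, strictMono_id, 0, 0, fun j => by simp,
      fun j hj => absurd hj (Nat.not_lt_zero j)⟩
  | succ m ih =>
    obtain ⟨φ, hφ, c₀, u₀, hu₀, hconv⟩ := ih
    have hbdd : ∀ k, c (φ k) m ∈ Set.Icc (-R) R := fun k => abs_le.1 (hc (φ k) m)
    obtain ⟨a, -, ψ, hψ, ha⟩ :=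
      tendsto_subseq_of_bounded (Metric.isBounded_Icc (-R) R) hbdd
    obtain ⟨um, χ, hχ, hum⟩ := hball (fun k => u (φ (ψ k)) m) (fun k => hu _ _)
    refine ⟨φ ∘ ψ ∘ χ, hφ.comp (hψ.comp hχ), Function.update c₀ m a,
      Function.update u₀ m um, ?_, ?_⟩
    · intro j
      rcases eq_or_ne j m with rfl | hj
      · rw [Function.update_self]
        exact norm_le_one_of_weakstar (fun k => hu _ _) hum
      · rw [Function.update_of_ne hj]; exact hu₀ j
    · intro j hj
      rcases eq_or_ne j m with rfl | hj'
      · rw [Function.update_self, Function.update_self]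
        exact ⟨ha.comp hχ.tendsto_atTop, hum⟩
      · have hjm : j < m := lt_of_le_of_ne (Nat.lt_succ_iff.1 hj) hj'
        rw [Function.update_of_ne hj', Function.update_of_ne hj']
        obtain ⟨h1, h2⟩ := hconv j hjm
        exact ⟨h1.comp (hψ.comp hχ).tendsto_atTop,
          fun x => (h2 x).comp (hψ.comp hχ).tendsto_atTop⟩


lemma lambdaB_weakstar_seqClosed
    (hball : ∀ u : ℕ → StrongDual ℝ X, (∀ k, ‖u k‖ ≤ 1) →
      ∃ (u₀ : StrongDual ℝ X) (φ : ℕ → ℕ), StrictMono φ ∧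
        WeakStarTendsto (u ∘ φ) u₀)
    (hA1 : ∀ (u : ℕ → StrongDual ℝ X) (u₀ : StrongDual ℝ X),
      WeakStarTendsto u u₀ →
      ∀ y : Y, Tendsto (fun k => T (u k) y) atTop (𝓝 (T u₀ y)))
    (m : ℕ) {R : ℝ} {g : ℕ → StrongDual ℝ Y} {f : StrongDual ℝ Y}
    (hg : ∀ k, g k ∈ LambdaB T (m : ℕ∞) R)
    (hlim : ∀ y, Tendsto (fun k => g k y) atTop (𝓝 (f y))) :
    f ∈ LambdaB T (m : ℕ∞) R := by
  choose c u h1 h2 h3 h4 h5 using hg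
  have hsupp : ∀ k j, m ≤ j → c k j = 0 := fun k j hj => h2 k j (by exact_mod_cast hj)
  have habs : ∀ k j, |c k j| ≤ R := by
    intro k j
    calc |c k j| ≤ ∑' i, |c k i| := Summable.le_tsum (h3 k) j (fun i _ => abs_nonneg _)
      _ ≤ R := h5 k
  obtain ⟨φ, hφ, c₀, u₀, hu₀, hconv⟩ := extract_subseq hball m c u habs (fun k j => h1 k j)
  set c' : ℕ → ℝ := fun j => if j < m then c₀ j else 0 with hc'
  have hgk : ∀ k y, g k y = ∑ j ∈ Finset.range m, c k j * (T (u k j) y) := by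
    intro k y
    have h0 : ∀ j ∉ Finset.range m, (fun j => (c k j • T (u k j)) y) j = 0 := by
      intro j hj
      rw [Finset.mem_range, not_lt] at hj
      simp [hsupp k j hj]
    have heq := (hasSum_eval (h4 k) y).unique (hasSum_sum_of_ne_finset_zero h0)
    simpa [ContinuousLinearMap.smul_apply, smul_eq_mul] using heq
  -- limit identification
  have hfy : ∀ y, f y = ∑ j ∈ Finset.range m, c' j * (T (u₀ j) y) := by
    intro y
    have hl1 : Tendsto (fun k => g (φ k) y) atTop (𝓝 (f y)) :=
      (hlim y).comp hφ.tendsto_atTop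
    have hl2 : Tendsto (fun k => ∑ j ∈ Finset.range m, c (φ k) j * (T (u (φ k) j) y))
        atTop (𝓝 (∑ j ∈ Finset.range m, c' j * (T (u₀ j) y))) := by
      apply tendsto_finset_sum
      intro j hj
      rw [Finset.mem_range] at hj
      have : c' j = c₀ j := if_pos hj
      rw [this]
      exact ((hconv j hj).1).mul (hA1 (fun k => u (φ k) j) (u₀ j) (hconv j hj).2 y)
    have : (fun k => g (φ k) y) = fun k => ∑ j ∈ Finset.range m, c (φ k) j * (T (u (φ k) j) y) :=
      funext fun k => hgk (φ k) y
    rw [this] at hl1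
    exact tendsto_nhds_unique hl1 hl2
  have hz : ∀ j ∉ Finset.range m, c' j = 0 := by
    intro j hj
    rw [Finset.mem_range, not_lt] at hj
    exact if_neg (not_lt.2 hj)
  refine ⟨c', u₀, hu₀, ?_, ?_, ?_, ?_⟩
  · intro j hj
    exact hz j (by rw [Finset.mem_range, not_lt]; exact_mod_cast hj)
  · exact summable_of_ne_finset_zero (s := Finset.range m) (fun j hj => by rw [hz j hj, abs_zero])
  · have h0 : ∀ j ∉ Finset.range m, c' j • T (u₀ j) = 0 := by
      intro j hj
      rw [hz j hj, zero_smul]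
    have hF : (∑ j ∈ Finset.range m, c' j • T (u₀ j)) = f := by
      ext y
      rw [ContinuousLinearMap.sum_apply, hfy y]
      simp [ContinuousLinearMap.smul_apply, smul_eq_mul]
    exact hF ▸ hasSum_sum_of_ne_finset_zero h0
  · have htsum : ∑' j, |c' j| = ∑ j ∈ Finset.range m, |c' j| :=
      tsum_eq_sum (fun j hj => by rw [hz j hj, abs_zero])
    rw [htsum]
    have hk : ∀ k, ∑ j ∈ Finset.range m, |c (φ k) j| ≤ R := by
      intro k
      have : ∑' j, |c (φ k) j| = ∑ j ∈ Finset.range m, |c (φ k) j| :=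
        tsum_eq_sum (fun j hj => by
          rw [Finset.mem_range, not_lt] at hj
          rw [hsupp (φ k) j hj, abs_zero])
      rw [← this]; exact h5 (φ k)
    have hl : Tendsto (fun k => ∑ j ∈ Finset.range m, |c (φ k) j|) atTop
        (𝓝 (∑ j ∈ Finset.range m, |c' j|)) := by
      apply tendsto_finset_sum
      intro j hj
      rw [Finset.mem_range] at hj
      have : c' j = c₀ j := if_pos hj
      rw [this]
      exact ((hconv j hj).1).abs
    exact le_of_tendsto hl (Filter.Eventually.of_forall hk)


lemma nonmeagre_interior_closure {Z : Type*} [TopologicalSpace Z] {s : Set Z}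
    (h : ¬ IsMeagre s) : (interior (closure s)).Nonempty := by
  rw [Set.nonempty_iff_ne_empty]
  intro he
  apply h
  rw [isMeagre_iff_countable_union_isNowhereDense]
  exact ⟨{s}, by simpa [IsNowhereDense] using he, Set.countable_singleton _, by simp⟩

lemma finite_case
    (hball : ∀ u : ℕ → StrongDual ℝ X, (∀ k, ‖u k‖ ≤ 1) →
      ∃ (u₀ : StrongDual ℝ X) (φ : ℕ → ℕ), StrictMono φ ∧
        WeakStarTendsto (u ∘ φ) u₀)
    (hA1 : ∀ (u : ℕ → StrongDual ℝ X) (u₀ : StrongDual ℝ X),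
      WeakStarTendsto u u₀ →
      ∀ y : Y, Tendsto (fun k => T (u k) y) atTop (𝓝 (T u₀ y)))
    (hA3 : ∃ (σX : ℕ → StrongDual ℝ X ≃ₗᵢ[ℝ] StrongDual ℝ X)
             (σY : ℕ → StrongDual ℝ Y ≃ₗᵢ[ℝ] StrongDual ℝ Y),
      (∀ k u, T (σX k u) = σY k (T u)) ∧
      (∀ f : StrongDual ℝ Y, ∀ y : Y,
        Tendsto (fun k => σY k f y) atTop (𝓝 0)))
    (m : ℕ) (hm : ¬ IsMeagre (Lambda T (m : ℕ∞))) :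
    ∃ C : ℝ, 0 < C ∧ ∀ f : StrongDual ℝ Y, f ∈ LambdaB T (m : ℕ∞) (C * ‖f‖) := by
  obtain ⟨n, hn, hnm⟩ := exists_nonmeagre_LambdaB hm
  have hcl : IsClosed (LambdaB T (m : ℕ∞) (n : ℝ)) := by
    apply IsSeqClosed.isClosed
    intro g f hg hgf
    apply lambdaB_weakstar_seqClosed hball hA1 m hg
    intro y
    exact ((ContinuousLinearMap.apply ℝ ℝ y).continuous.tendsto f).comp hgf
  have hint : (interior (LambdaB T (m : ℕ∞) (n : ℝ))).Nonempty := by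
    have := nonmeagre_interior_closure hnm
    rwa [hcl.closure_eq] at this
  obtain ⟨f₀, hf₀⟩ := hint
  obtain ⟨r, hr, hsub⟩ := Metric.mem_nhds_iff.1 (mem_interior_iff_mem_nhds.1 hf₀)
  obtain ⟨σX, σY, hcomm, hdecay⟩ := hA3
  have claim : ∀ f : StrongDual ℝ Y, ‖f‖ < r → f ∈ LambdaB T (m : ℕ∞) (n : ℝ) := by
    intro f hf
    have hk : ∀ k, f + σY k f₀ ∈ LambdaB T (m : ℕ∞) (n : ℝ) := by
      intro k
      have h1 : (σY k).symm f + f₀ ∈ Metric.ball f₀ r := by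
        rw [Metric.mem_ball, dist_eq_norm]
        simpa using hf
      have h2 := sigma_mem_LambdaB (σX k) (σY k) (hcomm k) (hsub h1)
      rwa [map_add, (σY k).apply_symm_apply] at h2
    apply lambdaB_weakstar_seqClosed hball hA1 m hk
    intro y
    have h3 : Tendsto (fun k => f y + σY k f₀ y) atTop (𝓝 (f y + 0)) :=
      tendsto_const_nhds.add (hdecay f₀ y)
    simpa using h3
  refine ⟨2 * n / r, by positivity, fun f => ?_⟩
  rcases eq_or_ne f 0 with rfl | hf0
  · exact ⟨0, 0, by simp, by simp, by simpa using summable_zero, by simpa using hasSum_zero, by simp⟩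
  · have hfpos : (0 : ℝ) < ‖f‖ := norm_pos_iff.2 hf0
    set a := r / (2 * ‖f‖) with ha
    have ha0 : 0 < a := by positivity
    have hlt : ‖a • f‖ < r := by
      have h1 : a * ‖f‖ = r / 2 := by
        rw [ha]; field_simp
      rw [norm_smul, Real.norm_eq_abs, abs_of_pos ha0, h1]
      linarith
    have hmem := smul_mem_LambdaB a⁻¹ (claim _ hlt)
    rw [inv_smul_smul₀ (ne_of_gt ha0)] at hmem
    have heq : |a⁻¹| * (n : ℝ) = 2 * n / r * ‖f‖ := by
      rw [abs_of_pos (inv_pos.2 ha0), ha]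
      field_simp
    rwa [heq] at hmem


lemma top_support (c : ℕ → ℝ) : ∀ j : ℕ, (⊤ : ℕ∞) ≤ (j : ℕ∞) → c j = 0 := by
  intro j hj
  exact absurd (top_le_iff.1 hj).symm (by simp)

lemma add_mem_LambdaB_top {R S : ℝ} {f g : StrongDual ℝ Y}
    (hf : f ∈ LambdaB T ⊤ R) (hg : g ∈ LambdaB T ⊤ S) :
    f + g ∈ LambdaB T ⊤ (R + S) := by
  obtain ⟨c, u, hc1, -, hc3, hc4, hc5⟩ := hf
  obtain ⟨d, v, hd1, -, hd3, hd4, hd5⟩ := hg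
  set cc : ℕ → ℝ := fun j => if Even j then c (j / 2) else d (j / 2) with hcc
  set uu : ℕ → StrongDual ℝ X := fun j => if Even j then u (j / 2) else v (j / 2) with huu
  have he : ∀ k : ℕ, (2 * k) / 2 = k := fun k => by omega
  have ho : ∀ k : ℕ, (2 * k + 1) / 2 = k := fun k => by omega
  have hev : ∀ k : ℕ, Even (2 * k) := fun k => even_two_mul k
  have hod : ∀ k : ℕ, ¬ Even (2 * k + 1) := fun k => by rw [Nat.even_iff]; omega
  have e1 : (fun k => cc (2 * k) • T (uu (2 * k))) = fun k => c k • T (u k) :=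
    funext fun k => by simp only [hcc, huu, if_pos (hev k), he k]
  have e2 : (fun k => cc (2 * k + 1) • T (uu (2 * k + 1))) = fun k => d k • T (v k) :=
    funext fun k => by simp only [hcc, huu, if_neg (hod k), ho k]
  have e3 : (fun k => |cc (2 * k)|) = fun k => |c k| :=
    funext fun k => by simp only [hcc, if_pos (hev k), he k]
  have e4 : (fun k => |cc (2 * k + 1)|) = fun k => |d k| :=
    funext fun k => by simp only [hcc, if_neg (hod k), ho k]
  have habs : HasSum (fun j => |cc j|) ((∑' j, |c j|) + ∑' j, |d j|) := by
    apply HasSum.even_add_odd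
    · rw [e3]; exact hc3.hasSum
    · rw [e4]; exact hd3.hasSum
  refine ⟨cc, uu, ?_, top_support cc, habs.summable, ?_, ?_⟩
  · intro j
    simp only [huu]
    split <;> [exact hc1 _; exact hd1 _]
  · apply HasSum.even_add_odd
    · rw [e1]; exact hc4
    · rw [e2]; exact hd4
  · rw [habs.tsum_eq]
    exact add_le_add hc5 hd5

lemma neg_mem_LambdaB {R : ℝ} {f : StrongDual ℝ Y}
    (hf : f ∈ LambdaB T ω R) : -f ∈ LambdaB T ω R := by
  have h := smul_mem_LambdaB (-1) hf
  have hneg : (-1 : ℝ) • f = -f := by ext y; simp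
  rw [hneg] at h
  simpa using h

lemma convex_LambdaB_top {R : ℝ} (hR : 0 ≤ R) : Convex ℝ (LambdaB T ⊤ R) := by
  intro f hf g hg p q hp hq hpq
  have h3 := add_mem_LambdaB_top (smul_mem_LambdaB p hf) (smul_mem_LambdaB q hg)
  apply LambdaB_mono _ h3
  rw [abs_of_nonneg hp, abs_of_nonneg hq]
  nlinarith

lemma closure_ball_zero {n : ℝ} (hn0 : 0 ≤ n) (hnm : ¬ IsMeagre (LambdaB T ⊤ n)) :
    ∃ r : ℝ, 0 < r ∧ ∀ f : StrongDual ℝ Y, ‖f‖ < r → f ∈ closure (LambdaB T ⊤ n) := by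
  obtain ⟨f₀, hf₀⟩ := nonmeagre_interior_closure hnm
  obtain ⟨r, hr, hsub⟩ := Metric.mem_nhds_iff.1 (mem_interior_iff_mem_nhds.1 hf₀)
  refine ⟨r, hr, fun f hf => ?_⟩
  have hconv : Convex ℝ (closure (LambdaB T ⊤ n)) := (convex_LambdaB_top hn0).closure
  have h1 : f₀ + f ∈ closure (LambdaB T ⊤ n) :=
    hsub (by rw [Metric.mem_ball, dist_eq_norm]; simpa using hf)
  have h2 : f₀ - f ∈ closure (LambdaB T ⊤ n) :=
    hsub (by rw [Metric.mem_ball, dist_eq_norm]; simpa using hf)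
  have hneg : -(f₀ - f) ∈ closure (LambdaB T ⊤ n) := by
    have h3 : -(f₀ - f) ∈ -(closure (LambdaB T ⊤ n)) := Set.neg_mem_neg.2 h2
    rw [neg_closure] at h3
    refine closure_mono (fun g hg => ?_) h3
    simpa using neg_mem_LambdaB (Set.mem_neg.1 hg)
  have hcomb := hconv h1 hneg (by norm_num : (0:ℝ) ≤ 1/2) (by norm_num : (0:ℝ) ≤ 1/2)
    (by norm_num)
  have heq : (1/2 : ℝ) • (f₀ + f) + (1/2 : ℝ) • (-(f₀ - f)) = f := by
    module
  rwa [heq] at hcomb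


set_option maxHeartbeats 2000000 in
lemma mem_LambdaB_of_closure [CompleteSpace Y] {M n r : ℝ}
    (hM : 0 < M) (hTb : ∀ u : StrongDual ℝ X, ‖u‖ ≤ 1 → ‖T u‖ ≤ M)
    (hn : 0 ≤ n) (hr : 0 < r)
    (hcl : ∀ f : StrongDual ℝ Y, ‖f‖ < r → f ∈ closure (LambdaB T ⊤ n)) :
    ∀ f : StrongDual ℝ Y, ‖f‖ ≤ r / 2 → f ∈ LambdaB T ⊤ (2 * n) := by
  intro f hf
  have pick : ∀ (k : ℕ) (v : StrongDual ℝ Y), ∃ g : StrongDual ℝ Y,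
      (‖v‖ ≤ r / 2 ^ (k + 1) → g ∈ LambdaB T ⊤ (n / 2 ^ k) ∧ ‖v - g‖ ≤ r / 2 ^ (k + 2)) := by
    intro k v
    by_cases h : ‖v‖ ≤ r / 2 ^ (k + 1)
    · set t : ℝ := (2 : ℝ)⁻¹ ^ k with ht
      have ht0 : 0 < t := by positivity
      have htinv : t⁻¹ = 2 ^ k := by rw [ht, ← inv_pow, inv_inv]
      have h1 : ‖t⁻¹ • v‖ < r := by
        rw [norm_smul, Real.norm_eq_abs, abs_of_pos (inv_pos.2 ht0), htinv]
        calc (2:ℝ) ^ k * ‖v‖ ≤ 2 ^ k * (r / 2 ^ (k+1)) :=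
              mul_le_mul_of_nonneg_left h (by positivity)
          _ = r / 2 := by rw [pow_succ]; field_simp
          _ < r := by linarith
      have h2 := hcl _ h1
      rw [Metric.mem_closure_iff] at h2
      obtain ⟨b, hb, hdist⟩ := h2 (r / 2 ^ (k + 2) / t) (by positivity)
      refine ⟨t • b, fun _ => ⟨?_, ?_⟩⟩
      · have hmem := smul_mem_LambdaB t hb
        have he : |t| * n = n / 2 ^ k := by
          rw [abs_of_pos ht0, ht, inv_pow, inv_mul_eq_div]
        rwa [he] at hmem
      · have heq : v - t • b = t • (t⁻¹ • v - b) := by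
          rw [smul_sub, smul_inv_smul₀ (ne_of_gt ht0)]
        rw [heq, norm_smul, Real.norm_eq_abs, abs_of_pos ht0]
        rw [dist_eq_norm] at hdist
        calc t * ‖t⁻¹ • v - b‖ ≤ t * (r / 2 ^ (k + 2) / t) :=
              mul_le_mul_of_nonneg_left hdist.le ht0.le
          _ = r / 2 ^ (k + 2) := by field_simp
    · exact ⟨0, fun h' => absurd h' h⟩
  choose P hP using pick
  set fs : ℕ → StrongDual ℝ Y := fun k => Nat.rec f (fun k fk => fk - P k fk) k with hfs
  have hfs0 : fs 0 = f := rfl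
  have hfsS : ∀ k, fs (k + 1) = fs k - P k (fs k) := fun k => rfl
  have hinv : ∀ k, ‖fs k‖ ≤ r / 2 ^ (k + 1) := by
    intro k
    induction k with
    | zero => rw [hfs0]; simpa using hf
    | succ k ih =>
      have h3 := (hP k (fs k) ih).2
      rw [hfsS k]
      calc ‖fs k - P k (fs k)‖ ≤ r / 2 ^ (k + 2) := h3
        _ = r / 2 ^ (k + 1 + 1) := by norm_num
  set G : ℕ → StrongDual ℝ Y := fun k => P k (fs k) with hGdef
  have hG : ∀ k, G k ∈ LambdaB T ⊤ (n / 2 ^ k) := fun k => (hP k (fs k) (hinv k)).1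
  have hpart : ∀ k, fs k = f - ∑ i ∈ Finset.range k, G i := by
    intro k
    induction k with
    | zero => simp [hfs0]
    | succ k ih =>
      have hstep : fs (k + 1) = fs k - G k := hfsS k
      rw [hstep, ih, Finset.sum_range_succ, sub_sub]
  have htend : Tendsto (fun K => ∑ i ∈ Finset.range K, G i) atTop (𝓝 f) := by
    rw [← tendsto_sub_nhds_zero_iff]
    apply squeeze_zero_norm (a := fun K => r / 2 ^ (K + 1))
    · intro K
      have h4 := hinv K
      rw [hpart K] at h4
      simpa [norm_sub_rev] using h4
    · have h5 : (fun K : ℕ => r / 2 ^ (K + 1)) = fun K => (r / 2) * (2⁻¹) ^ K := by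
        funext K; rw [pow_succ, inv_pow]; ring
      rw [h5]
      simpa using
        ((tendsto_pow_atTop_nhds_zero_of_lt_one (r := (2:ℝ)⁻¹) (by norm_num)
          (by norm_num)).const_mul (r / 2))
  have hG' : ∀ k, ∃ (c : ℕ → ℝ) (u : ℕ → StrongDual ℝ X),
      (∀ j, ‖u j‖ ≤ 1) ∧ (∀ j : ℕ, (⊤ : ℕ∞) ≤ (j : ℕ∞) → c j = 0) ∧
      Summable (fun j => |c j|) ∧ HasSum (fun j => c j • T (u j)) (G k) ∧
      ∑' j, |c j| ≤ n / 2 ^ k := hG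
  choose c u hc1 hc2 hc3 hc4 hc5 using hG'
  obtain ⟨e⟩ : Nonempty (ℕ ≃ ℕ × ℕ) := ⟨(Denumerable.eqv (ℕ × ℕ)).symm⟩
  have hgeoeq : (fun k : ℕ => n / 2 ^ k) = fun k => n * (2⁻¹) ^ k := by
    funext k; rw [inv_pow]; ring
  have hgeo : Summable (fun k : ℕ => n / 2 ^ k) := by
    rw [hgeoeq]
    exact (summable_geometric_of_lt_one (by norm_num) (by norm_num)).mul_left n
  have hgeosum : ∑' k : ℕ, n / 2 ^ k = 2 * n := by
    rw [hgeoeq, tsum_mul_left, tsum_geometric_of_lt_one (by norm_num) (by norm_num)]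
    norm_num
    ring
  have hP2 : Summable (fun p : ℕ × ℕ => |c p.1 p.2|) := by
    rw [summable_prod_of_nonneg (fun p => abs_nonneg _)]
    exact ⟨fun k => hc3 k,
      Summable.of_nonneg_of_le (fun k => tsum_nonneg (fun j => abs_nonneg _))
        (fun k => hc5 k) hgeo⟩
  have hrowsum : Summable (fun k => ∑' j, |c k j|) :=
    Summable.of_nonneg_of_le (fun k => tsum_nonneg (fun j => abs_nonneg _))
      (fun k => hc5 k) hgeo
  have hP2tsum : ∑' p : ℕ × ℕ, |c p.1 p.2| ≤ 2 * n := by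
    rw [Summable.tsum_prod' hP2 (fun k => hc3 k)]
    calc ∑' k, ∑' j, |c k j| ≤ ∑' k, n / 2 ^ k :=
          Summable.tsum_le_tsum (fun k => hc5 k) hrowsum hgeo
      _ = 2 * n := hgeosum
  have hbnd : ∀ (k j : ℕ), ‖c k j • T (u k j)‖ ≤ M * |c k j| := by
    intro k j
    rw [norm_smul, Real.norm_eq_abs, mul_comm]
    exact mul_le_mul_of_nonneg_right (hTb _ (hc1 k j)) (abs_nonneg _)
  have hVrows : ∀ k, Summable (fun j => c k j • T (u k j)) := fun k =>
    Summable.of_norm_bounded ((hc3 k).mul_left M) (fun j => hbnd k j)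
  have hV : Summable (fun p : ℕ × ℕ => c p.1 p.2 • T (u p.1 p.2)) :=
    Summable.of_norm_bounded (hP2.mul_left M) (fun p => hbnd p.1 p.2)
  have hGnorm : ∀ k, ‖G k‖ ≤ M * (n / 2 ^ k) := by
    intro k
    have hnorms : Summable (fun j => ‖c k j • T (u k j)‖) :=
      Summable.of_nonneg_of_le (fun j => norm_nonneg _) (fun j => hbnd k j)
        ((hc3 k).mul_left M)
    rw [← (hc4 k).tsum_eq]
    calc ‖∑' j, c k j • T (u k j)‖ ≤ ∑' j, ‖c k j • T (u k j)‖ :=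
          norm_tsum_le_tsum_norm hnorms
      _ ≤ ∑' j, M * |c k j| := Summable.tsum_le_tsum (fun j => hbnd k j) hnorms ((hc3 k).mul_left M)
      _ = M * ∑' j, |c k j| := tsum_mul_left
      _ ≤ M * (n / 2 ^ k) := mul_le_mul_of_nonneg_left (hc5 k) hM.le
  have hGsummable : Summable G :=
    Summable.of_norm_bounded (hgeo.mul_left M) hGnorm
  have htsumG : ∑' k, G k = f :=
    tendsto_nhds_unique hGsummable.hasSum.tendsto_sum_nat htend
  have htsumV : ∑' p : ℕ × ℕ, c p.1 p.2 • T (u p.1 p.2) = f := by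
    rw [Summable.tsum_prod' hV hVrows]
    calc ∑' (k : ℕ) (j : ℕ), c k j • T (u k j) = ∑' k, G k := by
          congr 1
          funext k
          exact (hc4 k).tsum_eq
      _ = f := htsumG
  have hVf : HasSum (fun p : ℕ × ℕ => c p.1 p.2 • T (u p.1 p.2)) f := htsumV ▸ hV.hasSum
  have hfin1 : Summable (fun j => |c (e j).1 (e j).2|) := e.summable_iff.2 hP2
  have hfin2 : HasSum (fun j => c (e j).1 (e j).2 • T (u (e j).1 (e j).2)) f :=
    e.hasSum_iff.2 hVf
  have hfin3 : ∑' j, |c (e j).1 (e j).2| ≤ 2 * n := by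
    calc ∑' j, |c (e j).1 (e j).2| = ∑' p : ℕ × ℕ, |c p.1 p.2| :=
          e.tsum_eq (fun p : ℕ × ℕ => |c p.1 p.2|)
      _ ≤ 2 * n := hP2tsum
  exact ⟨fun j => c (e j).1 (e j).2, fun j => u (e j).1 (e j).2,
    fun j => hc1 _ _, top_support _, hfin1, hfin2, hfin3⟩


lemma infinite_case [CompleteSpace Y]
    (hball : ∀ u : ℕ → StrongDual ℝ X, (∀ k, ‖u k‖ ≤ 1) →
      ∃ (u₀ : StrongDual ℝ X) (φ : ℕ → ℕ), StrictMono φ ∧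
        WeakStarTendsto (u ∘ φ) u₀)
    (hA1 : ∀ (u : ℕ → StrongDual ℝ X) (u₀ : StrongDual ℝ X),
      WeakStarTendsto u u₀ →
      ∀ y : Y, Tendsto (fun k => T (u k) y) atTop (𝓝 (T u₀ y)))
    (hnm : ¬ IsMeagre (Lambda T ⊤)) :
    ∃ C : ℝ, 0 < C ∧ ∀ f : StrongDual ℝ Y, f ∈ LambdaB T ⊤ (C * ‖f‖) := by
  obtain ⟨n, hn, hnmB⟩ := exists_nonmeagre_LambdaB hnm
  obtain ⟨M, hM, hTb⟩ := exists_T_bound hball hA1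
  obtain ⟨r, hr, hcl⟩ := closure_ball_zero (n := (n : ℝ)) (by positivity) hnmB
  have hmem := mem_LambdaB_of_closure hM hTb (by positivity : (0:ℝ) ≤ (n:ℝ)) hr hcl
  refine ⟨4 * n / r, by positivity, fun f => ?_⟩
  rcases eq_or_ne f 0 with rfl | hf0
  · exact ⟨0, 0, by simp, by simp, by simpa using summable_zero,
      by simpa using hasSum_zero, by simp⟩
  · have hfpos : (0:ℝ) < ‖f‖ := norm_pos_iff.2 hf0
    set a := r / (2 * ‖f‖) with ha
    have ha0 : 0 < a := by positivity
    have hle : ‖a • f‖ ≤ r / 2 := by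
      have h1 : a * ‖f‖ = r / 2 := by rw [ha]; field_simp
      rw [norm_smul, Real.norm_eq_abs, abs_of_pos ha0, h1]
    have h2 := smul_mem_LambdaB a⁻¹ (hmem _ hle)
    rw [inv_smul_smul₀ (ne_of_gt ha0)] at h2
    have heq : |a⁻¹| * (2 * n) = 4 * n / r * ‖f‖ := by
      rw [abs_of_pos (inv_pos.2 ha0), ha]; field_simp; ring
    rwa [heq] at h2

end AtomicAux

/-- **Proposition 2.5** (trichotomy for atomic decompositions in terms of `T`). -/
theorem atomic_decomposition_trichotomy
    (X Y : Type*) [NormedAddCommGroup X] [NormedSpace ℝ X] [CompleteSpace X]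
    [NormedAddCommGroup Y] [NormedSpace ℝ Y] [CompleteSpace Y]
    (hball : ∀ u : ℕ → StrongDual ℝ X, (∀ k, ‖u k‖ ≤ 1) →
      ∃ (u₀ : StrongDual ℝ X) (φ : ℕ → ℕ), StrictMono φ ∧
        WeakStarTendsto (u ∘ φ) u₀)
    (s : ℝ) (hs : 0 < s)
    (T : StrongDual ℝ X → StrongDual ℝ Y)
    (hA1 : ∀ (u : ℕ → StrongDual ℝ X) (u₀ : StrongDual ℝ X),
      WeakStarTendsto u u₀ →
      ∀ y : Y, Tendsto (fun k => T (u k) y) atTop (𝓝 (T u₀ y)))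
    (hA2 : ∀ a : ℝ, 0 < a → ∀ u, T (a • u) = a ^ s • T u)
    (hA3 : ∃ (σX : ℕ → StrongDual ℝ X ≃ₗᵢ[ℝ] StrongDual ℝ X)
             (σY : ℕ → StrongDual ℝ Y ≃ₗᵢ[ℝ] StrongDual ℝ Y),
      (∀ k u, T (σX k u) = σY k (T u)) ∧
      (∀ f : StrongDual ℝ Y, ∀ y : Y,
        Tendsto (fun k => σY k f y) atTop (𝓝 0)))
    (hnonmeagre : ¬ IsMeagre (Lambda T ⊤)) :
    ∃ ω : ℕ∞,
      Lambda T ω = Set.univ ∧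
      IsMeagre (⋃ m ∈ {m : ℕ | (m : ℕ∞) < ω}, Lambda T (m : ℕ∞)) ∧
      ∃ C : ℝ, 0 < C ∧ ∀ f : StrongDual ℝ Y,
        ∃ (c : ℕ → ℝ) (u : ℕ → StrongDual ℝ X),
          (∀ j, ‖u j‖ ≤ 1) ∧ (∀ j : ℕ, ω ≤ (j : ℕ∞) → c j = 0) ∧
          Summable (fun j => |c j|) ∧ HasSum (fun j => c j • T (u j)) f ∧
          ∑' j, |c j| ≤ C * ‖f‖ := by
  classical
  by_cases hfin : ∃ m : ℕ, ¬ IsMeagre (Lambda T (m : ℕ∞))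
  · obtain ⟨C, hC, hrep⟩ := finite_case hball hA1 hA3 (Nat.find hfin) (Nat.find_spec hfin)
    refine ⟨(Nat.find hfin : ℕ∞), ?_, ?_, C, hC, ?_⟩
    · exact Set.eq_univ_of_forall fun f => LambdaB_subset_Lambda (hrep f)
    · apply isMeagre_iUnion
      intro m
      by_cases hm : m ∈ {m : ℕ | (m : ℕ∞) < (Nat.find hfin : ℕ∞)}
      · rw [Set.iUnion_eq_if, if_pos hm]
        have hm' : (m : ℕ∞) < (Nat.find hfin : ℕ∞) := hm
        have hmlt : m < Nat.find hfin := by exact_mod_cast hm'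
        have h := Nat.find_min hfin hmlt
        rwa [not_not] at h
      · rw [Set.iUnion_eq_if, if_neg hm]
        exact IsMeagre.empty
    · intro f
      obtain ⟨c, u, h1, h2, h3, h4, h5⟩ := hrep f
      exact ⟨c, u, h1, h2, h3, h4, h5⟩
  · push_neg at hfin
    obtain ⟨C, hC, hrep⟩ := infinite_case hball hA1 hnonmeagre
    refine ⟨⊤, ?_, ?_, C, hC, fun f => ?_⟩
    · exact Set.eq_univ_of_forall fun f => LambdaB_subset_Lambda (hrep f)
    · refine (isMeagre_iUnion (fun m : ℕ => hfin m)).mono ?_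
      exact Set.iUnion₂_subset fun m _ =>
        Set.subset_iUnion (fun m : ℕ => Lambda T (m : ℕ∞)) m
    · obtain ⟨c, u, h1, h2, h3, h4, h5⟩ := hrep f
      exact ⟨c, u, h1, h2, h3, h4, h5⟩
end

section
/- Let I, J ≥ 1 be natural numbers, let X_1, …, X_I and Y_1, …, Y_J be Banach spaces, and set X* := X_1* × ⋯ × X_I* with norm ‖u‖_{X*} := max_{1 ≤ i ≤ I} ‖u_i‖_{X_i*} and Y* := Y_1* × ⋯ × Y_J* with norm ‖f‖_{Y*} := max_{1 ≤ j ≤ J} ‖f_j‖_{Y_j*}, weak* convergence on these products being componentwise. Assume 𝔹_{X*} is sequentially weak* compact, let D ⊆ X* with 0 ∈ D, and let T : D → Y* satisfy: (Â1) T has weak*-to-weak* sequentially closed graph: if u_k ∈ D converge weak* to u ∈ D and T u_k converge weak* to f, then T u = f; (Â2) there are exponents 0 < r_1 ≤ ⋯ ≤ r_I and 0 < s_1 ≤ ⋯ ≤ s_J and, for each λ > 0, bijections τ_λ^D : D → D and τ_λ^{Y*} : Y* → Y* such that T ∘ τ_λ^D = τ_λ^{Y*} ∘ T, ‖(τ_λ^D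 u)_i‖_{X_i*} = λ^{r_i} ‖u_i‖_{X_i*} for all u ∈ D and all i, and ‖(τ_λ^{Y*} f)_j‖_{Y_j*} = λ^{s_j} ‖f_j‖_{Y_j*} for all f ∈ Y* and all j; (Â3) there are sequences of bijections σ_k^D : D → D with σ_k^D(0) = 0 and ‖σ_k^D u‖_{X*} = ‖u‖_{X*} for all u ∈ D, and of linear isometric isomorphisms σ_k^{Y*} : Y* → Y*, such that T ∘ σ_k^D = σ_k^{Y*} ∘ T for all k and σ_k^{Y*} f converges weak* to 0 for every f ∈ Y*; (Â4) for every ℓ ∈ ℕ the set D_ℓ := { u ∈ D : ‖u‖_{X*} ≤ ℓ and ‖T u‖_{Y*} ≤ ℓ } is weak* sequentially closed in X*. Then the following are equivalent: (1) T(D) is non-meagre in Y*; (2) T(D) = Y*; (3) T is open at the origin, i.e. for every ε > 0 there is δ > 0 such that every f ∈ Y* with ‖f‖_{Y*} ≤ δ equals T u for some u ∈ D with ‖u‖_{X*} ≤ ε; (4) there is C > 0 such that every f ∈ Y* equals T u for some u ∈ D satisfying Σ_{i=1}^I ‖u_i‖_{X_i*}^{s_J/r_i} ≤ C ‖f‖_{Y*}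 if ‖f‖_{Y*} ≤ 1, and Σ_{i=1}^I ‖u_i‖_{X_i*}^{s_1/r_i} ≤ C ‖f‖_{Y*} if ‖f‖_{Y*} > 1. -/
open Filter Topology

set_option maxHeartbeats 1600000
set_option synthInstance.maxHeartbeats 1000000

/-- Componentwise weak-star convergence of a sequence in a finite product of dual spaces. -/
def PiWeakStarTendsto {ι : Type*} {X : ι → Type*}
    [∀ i, NormedAddCommGroup (X i)] [∀ i, NormedSpace ℝ (X i)]
    (u : ℕ → ∀ i, StrongDual ℝ (X i)) (u₀ : ∀ i, StrongDual ℝ (X i)) : Prop :=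
  ∀ (i : ι) (x : X i), Tendsto (fun k => u k i x) atTop (𝓝 (u₀ i x))

/-- **Theorem 5.1**: a general nonlinear open mapping principle for scale-invariant
problems, for an operator `T` defined on a subset `D` of a finite product of dual
Banach spaces (with the max norm), with values in a finite product of dual Banach
spaces. -/
theorem general_nonlinear_open_mapping_principle
    (I J : ℕ)
    (X : Fin (I + 1) → Type*) (Y : Fin (J + 1) → Type*)
    [∀ i, NormedAddCommGroup (X i)] [∀ i, NormedSpace ℝ (X i)] [∀ i, CompleteSpace (X i)]
    [∀ j, NormedAddCommGroup (Y j)] [∀ j, NormedSpace ℝ (Y j)] [∀ j, CompleteSpace (Y j)]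
    -- sequential weak* compactness of the unit ball of X*
    (hball : ∀ u : ℕ → ∀ i, StrongDual ℝ (X i), (∀ k, ‖u k‖ ≤ 1) →
      ∃ (u₀ : ∀ i, StrongDual ℝ (X i)) (φ : ℕ → ℕ), StrictMono φ ∧
        PiWeakStarTendsto (u ∘ φ) u₀)
    (D : Set (∀ i, StrongDual ℝ (X i))) (hD0 : 0 ∈ D)
    (T : (∀ i, StrongDual ℝ (X i)) → (∀ j, StrongDual ℝ (Y j)))
    -- (Â1) weak*-to-weak* sequentially closed graph
    (hA1 : ∀ (u : ℕ → ∀ i, StrongDual ℝ (X i)) (u₀ : ∀ i, StrongDual ℝ (X i))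
      (f : ∀ j, StrongDual ℝ (Y j)), (∀ k, u k ∈ D) → u₀ ∈ D →
      PiWeakStarTendsto u u₀ → PiWeakStarTendsto (fun k => T (u k)) f → T u₀ = f)
    -- (Â2) scaling symmetries
    (r : Fin (I + 1) → ℝ) (s : Fin (J + 1) → ℝ)
    (hr : ∀ i, 0 < r i) (hrmono : Monotone r)
    (hs : ∀ j, 0 < s j) (hsmono : Monotone s)
    (τD : ℝ → (∀ i, StrongDual ℝ (X i)) → (∀ i, StrongDual ℝ (X i)))
    (τY : ℝ → (∀ j, StrongDual ℝ (Y j)) → (∀ j, StrongDual ℝ (Y j)))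
    (hA2 : ∀ lam : ℝ, 0 < lam →
      Set.BijOn (τD lam) D D ∧ Function.Bijective (τY lam) ∧
      (∀ u ∈ D, T (τD lam u) = τY lam (T u)) ∧
      (∀ u ∈ D, ∀ i, ‖τD lam u i‖ = lam ^ (r i) * ‖u i‖) ∧
      (∀ f : ∀ j, StrongDual ℝ (Y j), ∀ j, ‖τY lam f j‖ = lam ^ (s j) * ‖f j‖))
    -- (Â3) commuting isometries with weak*-null orbits on the target
    (hA3 : ∃ (σD : ℕ → (∀ i, StrongDual ℝ (X i)) → (∀ i, StrongDual ℝ (X i)))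
             (σY : ℕ → (∀ j, StrongDual ℝ (Y j)) ≃ₗᵢ[ℝ] (∀ j, StrongDual ℝ (Y j))),
      (∀ k, Set.BijOn (σD k) D D) ∧ (∀ k, σD k 0 = 0) ∧
      (∀ k, ∀ u ∈ D, ‖σD k u‖ = ‖u‖) ∧
      (∀ k, ∀ u ∈ D, T (σD k u) = σY k (T u)) ∧
      (∀ f : ∀ j, StrongDual ℝ (Y j), PiWeakStarTendsto (fun k => σY k f) 0))
    -- (Â4) the truncated domains D_ℓ are weak* sequentially closed
    (hA4 : ∀ ℓ : ℕ, ∀ (u : ℕ → ∀ i, StrongDual ℝ (X i))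
      (u₀ : ∀ i, StrongDual ℝ (X i)),
      (∀ k, u k ∈ D ∧ ‖u k‖ ≤ ℓ ∧ ‖T (u k)‖ ≤ ℓ) → PiWeakStarTendsto u u₀ →
      u₀ ∈ D ∧ ‖u₀‖ ≤ ℓ ∧ ‖T u₀‖ ≤ ℓ) :
    List.TFAE
      [ ¬ IsMeagre (T '' D),
        T '' D = Set.univ,
        ∀ ε > (0 : ℝ), ∃ δ > (0 : ℝ), ∀ f : ∀ j, StrongDual ℝ (Y j), ‖f‖ ≤ δ →
          ∃ u ∈ D, T u = f ∧ ‖u‖ ≤ ε,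
        ∃ C : ℝ, 0 < C ∧ ∀ f : ∀ j, StrongDual ℝ (Y j),
          ∃ u ∈ D, T u = f ∧
            (‖f‖ ≤ 1 → ∑ i, ‖u i‖ ^ (s (Fin.last J) / r i) ≤ C * ‖f‖) ∧
            (1 < ‖f‖ → ∑ i, ‖u i‖ ^ (s 0 / r i) ≤ C * ‖f‖) ] := by
  classical
  obtain ⟨σD, σY, hσDbij, hσD0, hσDnorm, hσDT, hσYlim⟩ := hA3
  -- `T 0 = 0`
  have hT0 : T 0 = 0 := by
    obtain ⟨hbijD, hbijY, hcomm, hnormD, hnormY⟩ := hA2 (1/2) (by norm_num)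
    have hτ0 : τD (1/2) 0 = 0 := by
      funext i
      have h0 : ‖τD (1/2) (0 : ∀ i, StrongDual ℝ (X i)) i‖ = 0 := by
        rw [hnormD 0 hD0 i]; simp
      simpa using norm_eq_zero.mp h0
    have hfix : T 0 = τY (1/2) (T 0) := by
      conv_lhs => rw [← hτ0]
      exact hcomm 0 hD0
    funext j
    have h1 : ‖T 0 j‖ = (1/2 : ℝ) ^ (s j) * ‖T 0 j‖ := by
      conv_lhs => rw [hfix]
      exact hnormY (T 0) j
    have h2 : (1/2 : ℝ) ^ (s j) < 1 := Real.rpow_lt_one (by norm_num) (by norm_num) (hs j)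
    have h3 : ‖T 0 j‖ = 0 := by nlinarith [norm_nonneg (T 0 j)]
    simpa using norm_eq_zero.mp h3
  -- norm convergence implies componentwise weak-star convergence
  have hnormws : ∀ (f : ℕ → ∀ j, StrongDual ℝ (Y j)) (f₀ : ∀ j, StrongDual ℝ (Y j)),
      Tendsto f atTop (𝓝 f₀) → PiWeakStarTendsto f f₀ := by
    intro f f₀ hf j x
    have hc : Continuous (fun g : ∀ j, StrongDual ℝ (Y j) => g j x) := by
      exact (ContinuousLinearMap.apply ℝ ℝ x).continuous.comp (continuous_apply j)
    exact (hc.tendsto f₀).comp hf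
  -- sequential weak-star compactness of balls of arbitrary radius
  have hballc : ∀ (c : ℝ) (u : ℕ → ∀ i, StrongDual ℝ (X i)), (∀ k, ‖u k‖ ≤ c) →
      ∃ (u₀ : ∀ i, StrongDual ℝ (X i)) (φ : ℕ → ℕ), StrictMono φ ∧
        PiWeakStarTendsto (u ∘ φ) u₀ := by
    intro c u hu
    set c' : ℝ := max c 1 with hc'def
    have hc' : 0 < c' := lt_of_lt_of_le one_pos (le_max_right _ _)
    obtain ⟨w₀, φ, hφ, hconv⟩ := hball (fun k => c'⁻¹ • u k) (by
      intro k
      have : ‖c'⁻¹ • u k‖ = c'⁻¹ * ‖u k‖ := by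
        rw [norm_smul, Real.norm_eq_abs, abs_of_pos (inv_pos.mpr hc')]
      rw [this]
      calc c'⁻¹ * ‖u k‖ ≤ c'⁻¹ * c' := by
            apply mul_le_mul_of_nonneg_left _ (inv_pos.mpr hc').le
            exact (hu k).trans (le_max_left _ _)
        _ = 1 := inv_mul_cancel₀ hc'.ne'
      )
    refine ⟨c' • w₀, φ, hφ, ?_⟩
    intro i x
    have h1 := (hconv i x).const_mul c'
    have h2 : ∀ k, c' * ((fun k => c'⁻¹ • u k) ∘ φ) k i x = u (φ k) i x := by
      intro k
      simp only [Function.comp_apply, Pi.smul_apply, ContinuousLinearMap.smul_apply,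
        smul_eq_mul, ← mul_assoc, mul_inv_cancel₀ hc'.ne', one_mul]
    have h3 : (c' • w₀) i x = c' * w₀ i x := by
      simp [Pi.smul_apply, ContinuousLinearMap.smul_apply]
    rw [h3]
    exact h1.congr h2
  -- the workhorse lemma
  have hW : ∀ (ℓ : ℕ) (g : ∀ j, StrongDual ℝ (Y j))
      (v : ℕ → ∀ i, StrongDual ℝ (X i)),
      (∀ k, v k ∈ D ∧ ‖v k‖ ≤ (ℓ : ℝ) ∧ ‖T (v k)‖ ≤ (ℓ : ℝ)) →
      PiWeakStarTendsto (fun k => T (v k)) g →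
      ∃ u ∈ D, T u = g ∧ ‖u‖ ≤ (ℓ : ℝ) := by
    intro ℓ g v hv hTg
    obtain ⟨u₀, φ, hφ, hconv⟩ := hballc ℓ v (fun k => (hv k).2.1)
    have h4 := hA4 ℓ (v ∘ φ) u₀ (fun k => hv (φ k)) hconv
    have hT := hA1 (v ∘ φ) u₀ g (fun k => (hv (φ k)).1) h4.1 hconv (by
      intro j x
      exact (hTg j x).comp hφ.tendsto_atTop)
    exact ⟨u₀, h4.1, hT, h4.2.1⟩
  tfae_have 2 → 1 := by
    intro h2 hm
    rw [h2] at hm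
    unfold IsMeagre at hm
    rw [Set.compl_univ] at hm
    haveI : BaireSpace (∀ j, StrongDual ℝ (Y j)) := inferInstance
    have hd := dense_of_mem_residual hm
    have : Nonempty (∀ j, StrongDual ℝ (Y j)) := ⟨0⟩
    simpa using hd.nonempty
  tfae_have 1 → 3 := by
    intro h1
    -- decompose the image into images of the truncated domains
    set Dl : ℕ → Set (∀ i, StrongDual ℝ (X i)) :=
      fun ℓ => {u | u ∈ D ∧ ‖u‖ ≤ (ℓ : ℝ) ∧ ‖T u‖ ≤ (ℓ : ℝ)} with hDl
    have hdecomp : T '' D = ⋃ ℓ : ℕ, T '' Dl ℓ := by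
      ext f
      simp only [Set.mem_iUnion, Set.mem_image, hDl, Set.mem_setOf_eq]
      constructor
      · rintro ⟨u, hu, rfl⟩
        obtain ⟨ℓ, hℓ⟩ := exists_nat_ge (max ‖u‖ ‖T u‖)
        exact ⟨ℓ, u, ⟨hu, (le_max_left _ _).trans hℓ, (le_max_right _ _).trans hℓ⟩, rfl⟩
      · rintro ⟨ℓ, u, ⟨hu, -, -⟩, rfl⟩
        exact ⟨u, hu, rfl⟩
    have hex : ∃ ℓ : ℕ, ¬ IsMeagre (T '' Dl ℓ) := by
      by_contra hcon
      push_neg at hcon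
      exact h1 (hdecomp ▸ isMeagre_iUnion hcon)
    obtain ⟨ℓ, hℓ⟩ := hex
    -- the image of a truncated domain is norm-closed
    have hclosed : IsClosed (T '' Dl ℓ) := by
      apply IsSeqClosed.isClosed
      intro f f₀ hf hf0
      choose u hu hTu using hf
      have hws : PiWeakStarTendsto (fun k => T (u k)) f₀ := by
        intro j x
        simpa only [hTu] using hnormws f f₀ hf0 j x
      obtain ⟨u₀, hu₀D, hTu₀, hnorm₀⟩ := hW ℓ f₀ u (fun k => ⟨(hu k).1, (hu k).2.1,
        by rw [hTu k]; have := (hu k).2.2; rwa [hTu k] at this⟩) hws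
      refine ⟨u₀, ⟨hu₀D, hnorm₀, ?_⟩, hTu₀⟩
      rw [hTu₀]
      refine le_of_tendsto' hf0.norm (fun k => ?_)
      have := (hu k).2.2
      rwa [hTu k] at this
    -- nonempty interior
    have hne : (interior (T '' Dl ℓ)).Nonempty := by
      rcases Set.eq_empty_or_nonempty (interior (T '' Dl ℓ)) with hemp | hne
      · exfalso
        apply hℓ
        have hnd : IsNowhereDense (T '' Dl ℓ) := hclosed.isNowhereDense_iff.mpr hemp
        have hoc := isClosed_isNowhereDense_iff_compl.mp ⟨hclosed, hnd⟩
        exact residual_of_dense_open hoc.1 hoc.2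
      · exact hne
    obtain ⟨f₀, hf₀⟩ := hne
    obtain ⟨ρ, hρ, hballsub⟩ := Metric.isOpen_iff.mp isOpen_interior f₀ hf₀
    have hsub : Metric.ball f₀ ρ ⊆ T '' Dl ℓ := hballsub.trans interior_subset
    -- choose a big enough natural number bound
    obtain ⟨ℓ', hℓ'⟩ := exists_nat_ge (max (ℓ:ℝ) (‖f₀‖ + ρ))
    have hℓ'ℓ : (ℓ : ℝ) ≤ ℓ' := (le_max_left _ _).trans hℓ'
    have hℓ'f : ‖f₀‖ + ρ ≤ ℓ' := (le_max_right _ _).trans hℓ'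
    -- move the ball to the origin using the isometries σY
    have hkey : ∀ g : ∀ j, StrongDual ℝ (Y j), ‖g‖ ≤ ρ / 2 →
        ∃ u ∈ D, T u = g ∧ ‖u‖ ≤ (ℓ' : ℝ) := by
      intro g hg
      have hmem : ∀ k : ℕ, f₀ + (σY k).symm g ∈ T '' Dl ℓ := by
        intro k
        apply hsub
        rw [Metric.mem_ball]
        have : dist (f₀ + (σY k).symm g) f₀ = ‖(σY k).symm g‖ := by
          rw [dist_eq_norm, add_sub_cancel_left]
        rw [this, LinearIsometryEquiv.norm_map]
        linarith
      choose u hu hTu using hmem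
      set v : ℕ → ∀ i, StrongDual ℝ (X i) := fun k => σD k (u k) with hv
      have hvD : ∀ k, v k ∈ D := fun k => (hσDbij k).mapsTo (hu k).1
      have hTv : ∀ k, T (v k) = σY k f₀ + g := by
        intro k
        rw [hv]
        rw [hσDT k (u k) (hu k).1, hTu k, map_add, LinearIsometryEquiv.apply_symm_apply]
      have hvb : ∀ k, v k ∈ D ∧ ‖v k‖ ≤ (ℓ' : ℝ) ∧ ‖T (v k)‖ ≤ (ℓ' : ℝ) := by
        intro k
        refine ⟨hvD k, ?_, ?_⟩
        · rw [hv, hσDnorm k (u k) (hu k).1]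
          exact (hu k).2.1.trans hℓ'ℓ
        · rw [hTv k]
          calc ‖σY k f₀ + g‖ ≤ ‖σY k f₀‖ + ‖g‖ := norm_add_le _ _
            _ = ‖f₀‖ + ‖g‖ := by rw [LinearIsometryEquiv.norm_map]
            _ ≤ ‖f₀‖ + ρ := by linarith
            _ ≤ (ℓ' : ℝ) := hℓ'f
      have hws : PiWeakStarTendsto (fun k => T (v k)) g := by
        intro j x
        have h0 := (hσYlim f₀ j x).add_const (g j x)
        simp only [Pi.zero_apply, ContinuousLinearMap.zero_apply, zero_add] at h0
        have heq : ∀ k, T (v k) j x = (σY k f₀) j x + g j x := by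
          intro k
          rw [hTv k]
          simp [Pi.add_apply, ContinuousLinearMap.add_apply]
        simpa only [heq] using h0
      exact hW ℓ' g v hvb hws
    -- conclude by scaling
    intro ε hε
    set M : ℝ := (ℓ' : ℝ) + 1 with hM
    have hMpos : (0 : ℝ) < M := by positivity
    set lam : ℝ := min 1 ((ε / M) ^ (r 0)⁻¹) with hlamdef
    have hlam0 : 0 < lam :=
      lt_min one_pos (Real.rpow_pos_of_pos (by positivity) _)
    have hlam1 : lam ≤ 1 := min_le_left _ _
    refine ⟨lam ^ (s (Fin.last J)) * (ρ / 2), by positivity, ?_⟩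
    intro f hf
    obtain ⟨hbijD, hbijY, hcomm, hnormD, hnormY⟩ := hA2 lam hlam0
    obtain ⟨g, hg⟩ := hbijY.2 f
    have hgj : ∀ j, ‖g j‖ ≤ ρ / 2 := by
      intro j
      have h1 : ‖f j‖ = lam ^ (s j) * ‖g j‖ := by
        rw [← hg]; exact hnormY g j
      have hsj : (0 : ℝ) < lam ^ (s j) := Real.rpow_pos_of_pos hlam0 _
      have h4 : lam ^ (s (Fin.last J)) ≤ lam ^ (s j) :=
        Real.rpow_le_rpow_of_exponent_ge hlam0 hlam1 (hsmono (Fin.le_last j))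
      have h5 : ‖f j‖ ≤ lam ^ (s (Fin.last J)) * (ρ / 2) :=
        (norm_le_pi_norm f j).trans hf
      nlinarith [norm_nonneg (g j)]
    have hgnorm : ‖g‖ ≤ ρ / 2 :=
      (pi_norm_le_iff_of_nonneg (by positivity)).mpr hgj
    obtain ⟨u, huD, hTu, hunorm⟩ := hkey g hgnorm
    refine ⟨τD lam u, hbijD.mapsTo huD, ?_, ?_⟩
    · rw [hcomm u huD, hTu, hg]
    · refine (pi_norm_le_iff_of_nonneg hε.le).mpr (fun i => ?_)
      rw [hnormD u huD i]
      have h3 : ‖u i‖ ≤ M := (norm_le_pi_norm u i).trans (by rw [hM]; linarith)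
      have h4 : lam ^ (r i) ≤ lam ^ (r 0) :=
        Real.rpow_le_rpow_of_exponent_ge hlam0 hlam1 (hrmono (Fin.zero_le i))
      have h5 : lam ^ (r 0) ≤ ε / M := by
        calc lam ^ (r 0) ≤ ((ε / M) ^ (r 0)⁻¹) ^ (r 0) :=
              Real.rpow_le_rpow hlam0.le (min_le_right _ _) (hr 0).le
          _ = ε / M := Real.rpow_inv_rpow (by positivity) (hr 0).ne'
      calc lam ^ (r i) * ‖u i‖ ≤ (ε / M) * M := by
            apply mul_le_mul (h4.trans h5) h3 (norm_nonneg _) (by positivity)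
        _ = ε := div_mul_cancel₀ ε hMpos.ne'
  tfae_have 3 → 4 := by
    intro h3
    obtain ⟨δ₀, hδ₀, h⟩ := h3 1 one_pos
    set δ : ℝ := min δ₀ 1 with hδdef
    have hδpos : 0 < δ := lt_min hδ₀ one_pos
    have hδ1 : δ ≤ 1 := min_le_right _ _
    have hδδ₀ : δ ≤ δ₀ := min_le_left _ _
    set sJ : ℝ := s (Fin.last J) with hsJdef
    set s0 : ℝ := s 0 with hs0def
    have hs0 : 0 < s0 := hs 0
    have hsJ0 : 0 < sJ := hs _
    have hs0J : s0 ≤ sJ := hsmono (Fin.zero_le _)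
    set C : ℝ := ((I:ℝ)+1) * ((1/δ) + (1/δ) ^ (sJ/s0)) + 1 with hCdef
    have h1δ : (0:ℝ) < 1/δ := by positivity
    have hCa : ((I:ℝ)+1) * (1/δ) ≤ C := by
      have h2 : (0:ℝ) ≤ ((I:ℝ)+1) * ((1/δ) ^ (sJ/s0)) := by positivity
      rw [hCdef]; nlinarith
    have hCb : ((I:ℝ)+1) * ((1/δ) ^ (sJ/s0)) ≤ C := by
      have h2 : (0:ℝ) ≤ ((I:ℝ)+1) * (1/δ) := by positivity
      rw [hCdef]; nlinarith
    have hCpos : 0 < C := by rw [hCdef]; positivity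
    -- uniform bound on the sums
    have hsum : ∀ (v : ∀ i, StrongDual ℝ (X i)) (μ t : ℝ), 0 < μ → 0 < t →
        (∀ i, ‖v i‖ ≤ (μ ^ (r i))⁻¹) →
        ∑ i, ‖v i‖ ^ (t / r i) ≤ ((I:ℝ)+1) * (μ ^ t)⁻¹ := by
      intro v μ t hμ ht hv
      have hterm : ∀ i, ‖v i‖ ^ (t / r i) ≤ (μ ^ t)⁻¹ := by
        intro i
        have hri : r i ≠ 0 := (hr i).ne'
        have he : (0:ℝ) ≤ t / r i := (div_pos ht (hr i)).le
        calc ‖v i‖ ^ (t / r i) ≤ ((μ ^ (r i))⁻¹) ^ (t / r i) :=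
              Real.rpow_le_rpow (norm_nonneg _) (hv i) he
          _ = (μ ^ t)⁻¹ := by
              rw [← Real.rpow_neg hμ.le, ← Real.rpow_mul hμ.le, ← Real.rpow_neg hμ.le]
              congr 1
              field_simp
      calc ∑ i, ‖v i‖ ^ (t / r i) ≤ ∑ _i : Fin (I+1), (μ ^ t)⁻¹ :=
            Finset.sum_le_sum (fun i _ => hterm i)
        _ = ((I:ℝ)+1) * (μ ^ t)⁻¹ := by
            rw [Finset.sum_const, Finset.card_univ, Fintype.card_fin, nsmul_eq_mul]
            push_cast; ring
    refine ⟨C, hCpos, ?_⟩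
    intro f
    -- the main solver by scaling
    have main : ∀ μ : ℝ, 0 < μ → (∀ j, μ ^ (s j) * ‖f j‖ ≤ δ₀) →
        ∃ v ∈ D, T v = f ∧ ∀ i, ‖v i‖ ≤ (μ ^ (r i))⁻¹ := by
      intro μ hμ hb
      obtain ⟨hbijD, hbijY, hcomm, hnormD, hnormY⟩ := hA2 μ hμ
      have hgnorm : ‖τY μ f‖ ≤ δ₀ := by
        refine (pi_norm_le_iff_of_nonneg hδ₀.le).mpr (fun j => ?_)
        rw [hnormY f j]; exact hb j
      obtain ⟨u, huD, hTu, hunorm⟩ := h (τY μ f) hgnorm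
      obtain ⟨v, hvD, hvu⟩ := hbijD.surjOn huD
      have hTv : T v = f := by
        apply hbijY.1
        rw [← hcomm v hvD, hvu, hTu]
      refine ⟨v, hvD, hTv, fun i => ?_⟩
      have h2 : μ ^ (r i) * ‖v i‖ = ‖u i‖ := by rw [← hvu]; exact (hnormD v hvD i).symm
      have h3 : ‖u i‖ ≤ 1 := (norm_le_pi_norm u i).trans hunorm
      have hpos : (0:ℝ) < μ ^ (r i) := Real.rpow_pos_of_pos hμ _
      calc ‖v i‖ = (μ ^ (r i))⁻¹ * (μ ^ (r i) * ‖v i‖) := by field_simp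
        _ ≤ (μ ^ (r i))⁻¹ * 1 := by
            apply mul_le_mul_of_nonneg_left _ (by positivity)
            rw [h2]; exact h3
        _ = (μ ^ (r i))⁻¹ := mul_one _
    by_cases hf0 : f = 0
    · subst hf0
      refine ⟨0, hD0, hT0, fun _ => ?_, fun hcon => absurd hcon (by simp)⟩
      have hz : ∑ i, ‖(0 : ∀ i, StrongDual ℝ (X i)) i‖ ^ (sJ / r i) = 0 :=
        Finset.sum_eq_zero (fun i _ => by
          rw [Pi.zero_apply, norm_zero]
          exact Real.zero_rpow (div_pos hsJ0 (hr i)).ne')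
      rw [hz, norm_zero, mul_zero]
    · have hfpos : 0 < ‖f‖ := norm_pos_iff.mpr hf0
      by_cases hcase : ‖f‖ ≤ δ
      · -- small data
        set μ : ℝ := (δ / ‖f‖) ^ sJ⁻¹ with hμdef
        have hd1 : 1 ≤ δ / ‖f‖ := (one_le_div hfpos).mpr hcase
        have hμ1 : 1 ≤ μ := Real.one_le_rpow hd1 (by positivity)
        have hμpos : 0 < μ := lt_of_lt_of_le one_pos hμ1
        have hμsJ : μ ^ sJ = δ / ‖f‖ := Real.rpow_inv_rpow (by positivity) hsJ0.ne'
        have hb : ∀ j, μ ^ (s j) * ‖f j‖ ≤ δ₀ := by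
          intro j
          have h1 : μ ^ (s j) ≤ μ ^ sJ :=
            Real.rpow_le_rpow_of_exponent_le hμ1 (hsmono (Fin.le_last j))
          have h2 : ‖f j‖ ≤ ‖f‖ := norm_le_pi_norm f j
          have h3 : μ ^ (s j) * ‖f j‖ ≤ (δ / ‖f‖) * ‖f‖ := by
            apply mul_le_mul (h1.trans_eq hμsJ) h2 (norm_nonneg _) (by positivity)
          rw [div_mul_cancel₀ δ hfpos.ne'] at h3
          linarith
        obtain ⟨v, hvD, hTv, hvb⟩ := main μ hμpos hb
        have hμinv : (μ ^ sJ)⁻¹ = ‖f‖ / δ := by rw [hμsJ, inv_div]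
        refine ⟨v, hvD, hTv, fun _ => ?_, fun hcon => absurd hcon (by push_neg; linarith)⟩
        have hS := hsum v μ sJ hμpos hsJ0 hvb
        rw [hμinv] at hS
        calc ∑ i, ‖v i‖ ^ (sJ / r i) ≤ ((I:ℝ)+1) * (‖f‖ / δ) := hS
          _ = (((I:ℝ)+1) * (1/δ)) * ‖f‖ := by ring
          _ ≤ C * ‖f‖ := mul_le_mul_of_nonneg_right hCa (norm_nonneg f)
      · -- large data
        push_neg at hcase
        set μ : ℝ := (δ / ‖f‖) ^ s0⁻¹ with hμdef
        have ha : (0:ℝ) < δ / ‖f‖ := by positivity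
        have hμpos : 0 < μ := Real.rpow_pos_of_pos ha _
        have hd1 : δ / ‖f‖ ≤ 1 := by rw [div_le_one hfpos]; linarith
        have hμ1 : μ ≤ 1 := Real.rpow_le_one ha.le hd1 (by positivity)
        have hμs0 : μ ^ s0 = δ / ‖f‖ := Real.rpow_inv_rpow ha.le hs0.ne'
        have hb : ∀ j, μ ^ (s j) * ‖f j‖ ≤ δ₀ := by
          intro j
          have h1 : μ ^ (s j) ≤ μ ^ s0 :=
            Real.rpow_le_rpow_of_exponent_ge hμpos hμ1 (hsmono (Fin.zero_le j))
          have h2 : ‖f j‖ ≤ ‖f‖ := norm_le_pi_norm f j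
          have h3 : μ ^ (s j) * ‖f j‖ ≤ (δ / ‖f‖) * ‖f‖ :=
            mul_le_mul (h1.trans_eq hμs0) h2 (norm_nonneg _) ha.le
          rw [div_mul_cancel₀ δ hfpos.ne'] at h3
          linarith
        obtain ⟨v, hvD, hTv, hvb⟩ := main μ hμpos hb
        have hμt : ∀ t : ℝ, (μ ^ t)⁻¹ = (‖f‖ / δ) ^ (t / s0) := by
          intro t
          rw [hμdef, ← Real.rpow_mul ha.le, ← Real.rpow_neg ha.le]
          rw [show ‖f‖ / δ = (δ / ‖f‖)⁻¹ by rw [inv_div]]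
          rw [Real.inv_rpow ha.le, ← Real.rpow_neg ha.le]
          congr 1
          rw [div_eq_mul_inv]; ring
        refine ⟨v, hvD, hTv, ?_, ?_⟩
        · intro hf1
          have hS := hsum v μ sJ hμpos hsJ0 hvb
          rw [hμt sJ] at hS
          have he1 : 1 ≤ sJ / s0 := (one_le_div hs0).mpr hs0J
          have hff : ‖f‖ ^ (sJ / s0) ≤ ‖f‖ := by
            calc ‖f‖ ^ (sJ / s0) ≤ ‖f‖ ^ (1:ℝ) :=
                  Real.rpow_le_rpow_of_exponent_ge hfpos hf1 he1
              _ = ‖f‖ := Real.rpow_one _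
          have hδe : (0:ℝ) < δ ^ (sJ / s0) := Real.rpow_pos_of_pos hδpos _
          have hkey2 : (‖f‖ / δ) ^ (sJ / s0) ≤ (1/δ) ^ (sJ / s0) * ‖f‖ := by
            rw [Real.div_rpow (norm_nonneg f) hδpos.le,
                Real.div_rpow (by norm_num : (0:ℝ) ≤ 1) hδpos.le, Real.one_rpow,
                div_mul_eq_mul_div, one_mul]
            gcongr
          calc ∑ i, ‖v i‖ ^ (sJ / r i) ≤ ((I:ℝ)+1) * ((‖f‖ / δ) ^ (sJ / s0)) := hS
            _ ≤ ((I:ℝ)+1) * ((1/δ) ^ (sJ / s0) * ‖f‖) := by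
                apply mul_le_mul_of_nonneg_left hkey2 (by positivity)
            _ = (((I:ℝ)+1) * ((1/δ) ^ (sJ / s0))) * ‖f‖ := by ring
            _ ≤ C * ‖f‖ := mul_le_mul_of_nonneg_right hCb (norm_nonneg f)
        · intro hf1
          have hS := hsum v μ s0 hμpos hs0 hvb
          rw [hμt s0, div_self hs0.ne', Real.rpow_one] at hS
          calc ∑ i, ‖v i‖ ^ (s0 / r i) ≤ ((I:ℝ)+1) * (‖f‖ / δ) := hS
            _ = (((I:ℝ)+1) * (1/δ)) * ‖f‖ := by ring
            _ ≤ C * ‖f‖ := mul_le_mul_of_nonneg_right hCa (norm_nonneg f)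
  tfae_have 4 → 2 := by
    rintro ⟨C, hC, h⟩
    apply Set.eq_univ_of_forall
    intro f
    obtain ⟨u, hu, hTu, -, -⟩ := h f
    exact ⟨u, hu, hTu⟩
  tfae_finish
end

section
/- Let H be a nontrivial Hilbert space, n ≥ 1, p ∈ [1,2] and q ∈ [1,∞). If there exists a bounded linear map ι : L^q(ℝⁿ) → L^p(ℝⁿ; H) which is bounded below, i.e. ‖ι(f)‖_{L^p(ℝⁿ;H)} ≥ c ‖f‖_{L^q(ℝⁿ)} for some c > 0 and all f ∈ L^q(ℝⁿ), then 1 ≤ p ≤ q ≤ 2. -/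
open MeasureTheory

open MeasureTheory Finset NNReal
open scoped ENNReal

namespace EmbedAux

noncomputable def sgn (b : Bool) : ℝ := if b then 1 else -1

lemma sgn_abs (b : Bool) : |sgn b| = 1 := by cases b <;> simp [sgn]
lemma sgn_not (b : Bool) : sgn (!b) = - sgn b := by cases b <;> simp [sgn]

variable {N : ℕ}

lemma card_E : (Finset.univ : Finset (Fin N → Bool)).card = 2 ^ N := by
  simp [Finset.card_univ]

/-- flip the `a`-th coordinate -/
def flip (a : Fin N) (ε : Fin N → Bool) : Fin N → Bool := Function.update ε a (!(ε a))

lemma flip_involutive (a : Fin N) : Function.Involutive (flip a) := by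
  intro ε
  funext i
  by_cases h : i = a
  · subst h; simp [flip]
  · simp [flip, Function.update_of_ne h]

lemma sum_flip (a : Fin N) (h : (Fin N → Bool) → ℝ) :
    ∑ ε : Fin N → Bool, h ε = ∑ ε : Fin N → Bool, h (flip a ε) :=
  (Fintype.sum_equiv ((flip_involutive a).toPerm _) _ _ (fun _ => rfl)).symm

lemma pair_sum (a : Fin N) (h : (Fin N → Bool) → ℝ) :
    2 * ∑ ε : Fin N → Bool, h ε = ∑ ε : Fin N → Bool, (h ε + h (flip a ε)) := by
  rw [Finset.sum_add_distrib, ← sum_flip a h, two_mul]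

lemma flip_apply_self (a : Fin N) (ε : Fin N → Bool) : flip a ε a = !(ε a) := by
  simp [flip]

lemma flip_apply_ne (a : Fin N) (ε : Fin N → Bool) {i : Fin N} (h : i ≠ a) :
    flip a ε i = ε i := by simp [flip, Function.update_of_ne h]

variable {H : Type*} [NormedAddCommGroup H] [InnerProductSpace ℝ H]

lemma norm_sgn_smul (b : Bool) (v : H) : ‖sgn b • v‖ = ‖v‖ := by
  rw [norm_smul, Real.norm_eq_abs, sgn_abs, one_mul]

lemma sum_flip_eq (a : Fin N) (ε : Fin N → Bool) (v : Fin N → H) {s : Finset (Fin N)}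
    (ha : a ∉ s) : ∑ i ∈ s, sgn (flip a ε i) • v i = ∑ i ∈ s, sgn (ε i) • v i :=
  Finset.sum_congr rfl fun i hi => by
    rw [flip_apply_ne a ε (fun h => ha (h ▸ hi))]

/-- second moment identity -/
lemma P2 (v : Fin N → H) (s : Finset (Fin N)) :
    ∑ ε : Fin N → Bool, ‖∑ i ∈ s, sgn (ε i) • v i‖ ^ 2
      = 2 ^ N * ∑ i ∈ s, ‖v i‖ ^ 2 := by
  classical
  induction s using Finset.induction with
  | empty => simp [Finset.sum_const, card_E]
  | @insert a s ha ih =>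
      set F : (Fin N → Bool) → ℝ := fun ε => ‖∑ i ∈ insert a s, sgn (ε i) • v i‖ ^ 2 with hF
      have key : ∀ ε : Fin N → Bool,
          F ε + F (flip a ε) = 2 * ‖∑ i ∈ s, sgn (ε i) • v i‖ ^ 2 + 2 * ‖v a‖ ^ 2 := by
        intro ε
        rw [hF]
        simp only
        rw [Finset.sum_insert ha, Finset.sum_insert ha, sum_flip_eq a ε v ha,
          flip_apply_self, sgn_not, neg_smul, neg_add_eq_sub]
        set W := ∑ i ∈ s, sgn (ε i) • v i
        set u := sgn (ε a) • v a with hu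
        have hn : ‖u‖ = ‖v a‖ := norm_sgn_smul _ _
        have hadd : ‖u + W‖ ^ 2 = ‖u‖ ^ 2 + 2 * inner ℝ u W + ‖W‖ ^ 2 :=
          norm_add_sq_real u W
        have hsub : ‖W - u‖ ^ 2 = ‖W‖ ^ 2 - 2 * inner ℝ W u + ‖u‖ ^ 2 :=
          norm_sub_sq_real W u
        have hcomm : (inner ℝ u W : ℝ) = inner ℝ W u := real_inner_comm W u
        rw [hadd, hsub, hcomm, hn]
        ring
      have h2 := pair_sum a F
      rw [Finset.sum_congr rfl (fun ε _ => key ε)] at h2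
      rw [Finset.sum_add_distrib, ← Finset.mul_sum, ih, Finset.sum_const, card_E,
        nsmul_eq_mul] at h2
      rw [Finset.sum_insert ha]
      push_cast at h2 ⊢
      linarith

/-- fourth moment bound -/
lemma P4 (v : Fin N → H) (s : Finset (Fin N)) :
    ∑ ε : Fin N → Bool, ‖∑ i ∈ s, sgn (ε i) • v i‖ ^ 4
      ≤ 3 * 2 ^ N * (∑ i ∈ s, ‖v i‖ ^ 2) ^ 2 := by
  classical
  induction s using Finset.induction with
  | empty => simp
  | @insert a s ha ih =>
      set F : (Fin N → Bool) → ℝ := fun ε => ‖∑ i ∈ insert a s, sgn (ε i) • v i‖ ^ 4 with hF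
      have key : ∀ ε : Fin N → Bool,
          F ε + F (flip a ε) ≤ 2 * ‖∑ i ∈ s, sgn (ε i) • v i‖ ^ 4
            + 12 * ‖∑ i ∈ s, sgn (ε i) • v i‖ ^ 2 * ‖v a‖ ^ 2 + 2 * ‖v a‖ ^ 4 := by
        intro ε
        rw [hF]
        simp only
        rw [Finset.sum_insert ha, Finset.sum_insert ha, sum_flip_eq a ε v ha,
          flip_apply_self, sgn_not, neg_smul, neg_add_eq_sub]
        set W := ∑ i ∈ s, sgn (ε i) • v i
        set u := sgn (ε a) • v a with hu
        have hn : ‖u‖ = ‖v a‖ := norm_sgn_smul _ _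
        have hadd : ‖u + W‖ ^ 2 = ‖u‖ ^ 2 + 2 * inner ℝ u W + ‖W‖ ^ 2 :=
          norm_add_sq_real u W
        have hsub : ‖W - u‖ ^ 2 = ‖W‖ ^ 2 - 2 * inner ℝ W u + ‖u‖ ^ 2 :=
          norm_sub_sq_real W u
        have hcomm : (inner ℝ u W : ℝ) = inner ℝ W u := real_inner_comm W u
        have hcs : |(inner ℝ W u : ℝ)| ≤ ‖W‖ * ‖u‖ := abs_real_inner_le_norm W u
        have habs : |(inner ℝ W u : ℝ)| ^ 2 = (inner ℝ W u : ℝ) ^ 2 := sq_abs _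
        have hcs2 : (inner ℝ W u : ℝ) ^ 2 ≤ ‖W‖ ^ 2 * ‖u‖ ^ 2 := by
          nlinarith [abs_nonneg (inner ℝ W u : ℝ), norm_nonneg W, norm_nonneg u]
        have e4 : ‖u + W‖ ^ 4 = (‖u + W‖ ^ 2) ^ 2 := by ring
        have e4' : ‖W - u‖ ^ 4 = (‖W - u‖ ^ 2) ^ 2 := by ring
        rw [e4, e4', hadd, hsub, hcomm, hn] at *
        nlinarith [hcs2]
      have h2 := pair_sum a F
      have h3 : ∑ ε : Fin N → Bool, (F ε + F (flip a ε))
          ≤ ∑ ε : Fin N → Bool, (2 * ‖∑ i ∈ s, sgn (ε i) • v i‖ ^ 4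
            + 12 * ‖∑ i ∈ s, sgn (ε i) • v i‖ ^ 2 * ‖v a‖ ^ 2 + 2 * ‖v a‖ ^ 4) :=
        Finset.sum_le_sum fun ε _ => key ε
      have h4 : ∑ ε : Fin N → Bool, (2 * ‖∑ i ∈ s, sgn (ε i) • v i‖ ^ 4
            + 12 * ‖∑ i ∈ s, sgn (ε i) • v i‖ ^ 2 * ‖v a‖ ^ 2 + 2 * ‖v a‖ ^ 4)
          ≤ 2 * (3 * 2 ^ N * (∑ i ∈ s, ‖v i‖ ^ 2) ^ 2)
            + 12 * (2 ^ N * ∑ i ∈ s, ‖v i‖ ^ 2) * ‖v a‖ ^ 2 + 2 ^ N * (2 * ‖v a‖ ^ 4) := by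
        rw [Finset.sum_add_distrib, Finset.sum_add_distrib]
        gcongr ?_ + ?_ + ?_
        · rw [← Finset.mul_sum]; linarith [ih]
        · have : ∑ ε : Fin N → Bool, 12 * ‖∑ i ∈ s, sgn (ε i) • v i‖ ^ 2 * ‖v a‖ ^ 2
              = 12 * (∑ ε : Fin N → Bool, ‖∑ i ∈ s, sgn (ε i) • v i‖ ^ 2) * ‖v a‖ ^ 2 := by
            rw [Finset.mul_sum, Finset.sum_mul]
          rw [this, P2]
        · rw [Finset.sum_const, card_E, nsmul_eq_mul]
          push_cast
          exact le_refl _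
      rw [Finset.sum_insert ha]
      have hs2 : (0:ℝ) ≤ ∑ i ∈ s, ‖v i‖ ^ 2 :=
        Finset.sum_nonneg fun i _ => sq_nonneg _
      have h5 : (0:ℝ) ≤ 2 ^ N * (‖v a‖ ^ 2) ^ 2 :=
        mul_nonneg (by positivity) (sq_nonneg _)
      nlinarith [h2, h3, h4, h5, hs2, mul_nonneg (mul_nonneg (by positivity : (0:ℝ) ≤ (2:ℝ)^N) hs2) (sq_nonneg (‖v a‖))]



lemma real_rpow_add_le {r : ℝ} (a b : ℝ) (ha : 0 ≤ a) (hb : 0 ≤ b) (h0 : 0 < r) (h1 : r ≤ 1) :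
    (a + b) ^ r ≤ a ^ r + b ^ r := by
  have key := NNReal.rpow_add_le_add_rpow a.toNNReal b.toNNReal h0.le h1
  have hcoe : ((a.toNNReal + b.toNNReal : ℝ≥0) : ℝ) = a + b := by
    push_cast [Real.coe_toNNReal _ ha, Real.coe_toNNReal _ hb]; ring
  calc (a + b) ^ r = (((a.toNNReal + b.toNNReal : ℝ≥0) : ℝ)) ^ r := by rw [hcoe]
    _ = (((a.toNNReal + b.toNNReal) ^ r : ℝ≥0) : ℝ) := by rw [NNReal.coe_rpow]
    _ ≤ ((a.toNNReal ^ r + b.toNNReal ^ r : ℝ≥0) : ℝ) := by exact_mod_cast key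
    _ = a ^ r + b ^ r := by
        push_cast [NNReal.coe_rpow, Real.coe_toNNReal _ ha, Real.coe_toNNReal _ hb]; ring

lemma rpow_sum_le {ι : Type*} (s : Finset ι) (f : ι → ℝ) (hf : ∀ i ∈ s, 0 ≤ f i)
    {r : ℝ} (h0 : 0 < r) (h1 : r ≤ 1) :
    (∑ i ∈ s, f i) ^ r ≤ ∑ i ∈ s, f i ^ r := by
  classical
  induction s using Finset.induction with
  | empty => simp [Real.zero_rpow h0.ne']
  | @insert a s ha ih =>
      rw [Finset.sum_insert ha, Finset.sum_insert ha]
      have hfa : 0 ≤ f a := hf a (Finset.mem_insert_self a s)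
      have hfs : ∀ i ∈ s, 0 ≤ f i := fun i hi => hf i (Finset.mem_insert_of_mem hi)
      have hsum : 0 ≤ ∑ i ∈ s, f i := Finset.sum_nonneg hfs
      calc (f a + ∑ i ∈ s, f i) ^ r ≤ f a ^ r + (∑ i ∈ s, f i) ^ r :=
            real_rpow_add_le _ _ hfa hsum h0 h1
        _ ≤ f a ^ r + ∑ i ∈ s, f i ^ r := by linarith [ih hfs]



open Real in
lemma jensen_rpow {ι : Type*} [Fintype ι] [Nonempty ι] (z : ι → ℝ) (hz : ∀ i, 0 ≤ z i)
    {p : ℝ} (hp : 1 ≤ p) :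
    ((Fintype.card ι : ℝ)⁻¹ * ∑ i, z i) ^ p ≤ (Fintype.card ι : ℝ)⁻¹ * ∑ i, z i ^ p := by
  have hcard : (0:ℝ) < (Fintype.card ι : ℝ) := by
    exact_mod_cast Fintype.card_pos
  have key := Real.rpow_arith_mean_le_arith_mean_rpow Finset.univ
    (fun _ : ι => (Fintype.card ι : ℝ)⁻¹) z (fun i _ => by positivity)
    (by simp [Finset.sum_const, Finset.card_univ]) (fun i _ => hz i) hp
  rwa [← Finset.mul_sum, ← Finset.mul_sum] at key

open Real in
lemma jensen_rpow' {ι : Type*} [Fintype ι] [Nonempty ι] (z : ι → ℝ) (hz : ∀ i, 0 ≤ z i)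
    {p : ℝ} (hp1 : 1 ≤ p) (hp2 : p ≤ 2) :
    (Fintype.card ι : ℝ)⁻¹ * ∑ i, z i ^ p
      ≤ ((Fintype.card ι : ℝ)⁻¹ * ∑ i, z i ^ 2) ^ (p / 2) := by
  have hp0 : 0 < p := lt_of_lt_of_le one_pos hp1
  have hcard : (0:ℝ) < (Fintype.card ι : ℝ) := by exact_mod_cast Fintype.card_pos
  have he : 1 ≤ 2 / p := (le_div_iff₀ hp0).2 (by linarith)
  have key := Real.arith_mean_le_rpow_mean Finset.univ
    (fun _ : ι => (Fintype.card ι : ℝ)⁻¹) (fun i => z i ^ p) (fun i _ => by positivity)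
    (by simp [Finset.sum_const, Finset.card_univ])
    (fun i _ => Real.rpow_nonneg (hz i) p) he
  have hzz : ∀ i : ι, (z i ^ p) ^ (2 / p) = z i ^ 2 := by
    intro i
    rw [← Real.rpow_natCast (z i) 2, ← Real.rpow_mul (hz i)]
    congr 1
    field_simp
    norm_num
  have h12 : 1 / (2 / p) = p / 2 := by field_simp
  rw [← Finset.mul_sum, ← Finset.mul_sum] at key
  simp only [hzz, h12] at key
  exact key

section Moments

variable {N : ℕ} {H : Type*} [NormedAddCommGroup H] [InnerProductSpace ℝ H]

/-- Khintchine-type lower bound for the average of `‖Z ε‖ ^ p`. -/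
lemma kahane_low (v : Fin N → H) {p : ℝ} (hp1 : 1 ≤ p) (hp2 : p ≤ 2) :
    (∑ i, ‖v i‖ ^ 2) ^ (p / 2)
      ≤ 3 * ((2:ℝ) ^ N)⁻¹ * ∑ ε : Fin N → Bool, ‖∑ i, sgn (ε i) • v i‖ ^ p := by
  have hp0 : 0 < p := lt_of_lt_of_le one_pos hp1
  set σ2 : ℝ := ∑ i, ‖v i‖ ^ 2 with hσ2
  have hσ2_nonneg : 0 ≤ σ2 := Finset.sum_nonneg fun i _ => sq_nonneg _
  have h2N : (0:ℝ) < 2 ^ N := by positivity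
  set Z : (Fin N → Bool) → H := fun ε => ∑ i, sgn (ε i) • v i with hZ
  have hRHS_nonneg : 0 ≤ ((2:ℝ) ^ N)⁻¹ * ∑ ε : Fin N → Bool, ‖Z ε‖ ^ p := by
    apply mul_nonneg (by positivity)
    exact Finset.sum_nonneg fun ε _ => Real.rpow_nonneg (norm_nonneg _) p
  rcases eq_or_lt_of_le hσ2_nonneg with h0 | hσ2_pos
  · rw [← h0, Real.zero_rpow (by positivity : p / 2 ≠ 0)]
    linarith
  -- moments
  have hB : ∑ ε : Fin N → Bool, ‖Z ε‖ ^ 2 = 2 ^ N * σ2 := P2 v Finset.univ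
  have hD : ∑ ε : Fin N → Bool, ‖Z ε‖ ^ 4 ≤ 3 * 2 ^ N * σ2 ^ 2 := P4 v Finset.univ
  set A : ℝ := ∑ ε : Fin N → Bool, ‖Z ε‖ with hA
  set C3 : ℝ := ∑ ε : Fin N → Bool, ‖Z ε‖ ^ 3 with hC3
  have hA_nonneg : 0 ≤ A := Finset.sum_nonneg fun ε _ => norm_nonneg _
  have hC3_nonneg : 0 ≤ C3 := Finset.sum_nonneg fun ε _ => by positivity
  have hD_nonneg : 0 ≤ ∑ ε : Fin N → Bool, ‖Z ε‖ ^ 4 :=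
    Finset.sum_nonneg fun ε _ => by positivity
  -- Cauchy-Schwarz twice
  have cs1 : (2 ^ N * σ2) ^ 2 ≤ A * C3 := by
    have key := Finset.sum_mul_sq_le_sq_mul_sq Finset.univ
      (fun ε : Fin N → Bool => Real.sqrt ‖Z ε‖) (fun ε => ‖Z ε‖ * Real.sqrt ‖Z ε‖)
    have hself : ∀ ε : Fin N → Bool, Real.sqrt ‖Z ε‖ * Real.sqrt ‖Z ε‖ = ‖Z ε‖ :=
      fun ε => Real.mul_self_sqrt (norm_nonneg _)
    have e1 : ∀ ε : Fin N → Bool,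
        Real.sqrt ‖Z ε‖ * (‖Z ε‖ * Real.sqrt ‖Z ε‖) = ‖Z ε‖ ^ 2 := by
      intro ε; linear_combination ‖Z ε‖ * hself ε
    have e2 : ∀ ε : Fin N → Bool, Real.sqrt ‖Z ε‖ ^ 2 = ‖Z ε‖ :=
      fun ε => Real.sq_sqrt (norm_nonneg _)
    have e3 : ∀ ε : Fin N → Bool, (‖Z ε‖ * Real.sqrt ‖Z ε‖) ^ 2 = ‖Z ε‖ ^ 3 := by
      intro ε; linear_combination (‖Z ε‖ ^ 2) * hself ε
    simp only [e1] at key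
    rw [Finset.sum_congr rfl (fun ε _ => e2 ε), Finset.sum_congr rfl (fun ε _ => e3 ε)] at key
    rw [hA, hC3, ← hB]
    exact key
  have cs2 : C3 ^ 2 ≤ (2 ^ N * σ2) * ∑ ε : Fin N → Bool, ‖Z ε‖ ^ 4 := by
    have key := Finset.sum_mul_sq_le_sq_mul_sq Finset.univ
      (fun ε : Fin N → Bool => ‖Z ε‖) (fun ε => ‖Z ε‖ ^ 2)
    have e1 : ∀ ε : Fin N → Bool, ‖Z ε‖ * ‖Z ε‖ ^ 2 = ‖Z ε‖ ^ 3 := fun ε => by ring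
    have e2 : ∀ ε : Fin N → Bool, (‖Z ε‖ ^ 2) ^ 2 = ‖Z ε‖ ^ 4 := fun ε => by ring
    rw [Finset.sum_congr rfl (fun ε _ => e1 ε), Finset.sum_congr rfl (fun ε _ => e2 ε)] at key
    rw [hC3, ← hB]
    exact key
  -- combine: (2^N σ2)^3 ≤ A^2 * 3 * 2^N * σ2^2, hence σ2 ≤ 3 * (A/2^N)^2
  have hBpos : 0 < 2 ^ N * σ2 := mul_pos h2N hσ2_pos
  have combo : (2 ^ N * σ2) ^ 3 ≤ A ^ 2 * (3 * 2 ^ N * σ2 ^ 2) := by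
    nlinarith [cs1, cs2, hA_nonneg, hC3_nonneg, hBpos, hD, hD_nonneg,
      mul_le_mul_of_nonneg_left hD (mul_nonneg hA_nonneg hA_nonneg)]
  set m1 : ℝ := ((2:ℝ) ^ N)⁻¹ * A with hm1
  have hm1_nonneg : 0 ≤ m1 := mul_nonneg (by positivity) hA_nonneg
  have hA_eq : A = 2 ^ N * m1 := by rw [hm1]; field_simp
  have hσ2_le : σ2 ≤ 3 * m1 ^ 2 := by
    have h1 : ((2:ℝ) ^ N) ^ 3 * σ2 ^ 2 * σ2 ≤ ((2:ℝ) ^ N) ^ 3 * σ2 ^ 2 * (3 * m1 ^ 2) := by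
      calc ((2:ℝ) ^ N) ^ 3 * σ2 ^ 2 * σ2 = (2 ^ N * σ2) ^ 3 := by ring
        _ ≤ A ^ 2 * (3 * 2 ^ N * σ2 ^ 2) := combo
        _ = ((2:ℝ) ^ N) ^ 3 * σ2 ^ 2 * (3 * m1 ^ 2) := by rw [hA_eq]; ring
    exact le_of_mul_le_mul_left h1 (by positivity)
  -- Jensen for p ≥ 1
  have hjen : m1 ^ p ≤ ((2:ℝ) ^ N)⁻¹ * ∑ ε : Fin N → Bool, ‖Z ε‖ ^ p := by
    have := jensen_rpow (ι := Fin N → Bool) (fun ε => ‖Z ε‖) (fun ε => norm_nonneg _) hp1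
    rwa [Fintype.card_fun, Fintype.card_bool, Fintype.card_fin, Nat.cast_pow, Nat.cast_ofNat]
      at this
  -- put together
  have step1 : σ2 ^ (p / 2) ≤ (3 * m1 ^ 2) ^ (p / 2) :=
    Real.rpow_le_rpow hσ2_nonneg hσ2_le (by positivity)
  have step2 : (3 * m1 ^ 2) ^ (p / 2) ≤ 3 * m1 ^ p := by
    rw [Real.mul_rpow (by norm_num) (by positivity)]
    have e1 : (m1 ^ 2 : ℝ) ^ (p / 2) = m1 ^ p := by
      rw [← Real.rpow_natCast m1 2, ← Real.rpow_mul hm1_nonneg]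
      push_cast
      rw [show (2:ℝ) * (p / 2) = p by ring]
    rw [e1]
    have e2 : (3:ℝ) ^ (p / 2) ≤ 3 := by
      calc (3:ℝ) ^ (p / 2) ≤ (3:ℝ) ^ (1:ℝ) :=
            Real.rpow_le_rpow_of_exponent_le (by norm_num) (by linarith)
        _ = 3 := Real.rpow_one 3
    have hm1p : 0 ≤ m1 ^ p := Real.rpow_nonneg hm1_nonneg p
    exact mul_le_mul_of_nonneg_right e2 hm1p
  calc σ2 ^ (p / 2) ≤ 3 * m1 ^ p := step1.trans step2
    _ ≤ 3 * (((2:ℝ) ^ N)⁻¹ * ∑ ε : Fin N → Bool, ‖Z ε‖ ^ p) := by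
        exact mul_le_mul_of_nonneg_left hjen (by norm_num)
    _ = 3 * ((2:ℝ) ^ N)⁻¹ * ∑ ε : Fin N → Bool, ‖Z ε‖ ^ p := by ring

end Moments

section Moments2

variable {N : ℕ} {H : Type*} [NormedAddCommGroup H] [InnerProductSpace ℝ H]

/-- upper bound: average of `‖Z ε‖ ^ p` is at most `∑ ‖v i‖ ^ p`. -/
lemma type_upper (v : Fin N → H) {p : ℝ} (hp1 : 1 ≤ p) (hp2 : p ≤ 2) :
    ∑ ε : Fin N → Bool, ‖∑ i, sgn (ε i) • v i‖ ^ p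
      ≤ 2 ^ N * ∑ i, ‖v i‖ ^ p := by
  have hp0 : 0 < p := lt_of_lt_of_le one_pos hp1
  have h2N : (0:ℝ) < 2 ^ N := by positivity
  set Z : (Fin N → Bool) → H := fun ε => ∑ i, sgn (ε i) • v i with hZ
  have hjen := jensen_rpow' (ι := Fin N → Bool) (fun ε => ‖Z ε‖) (fun ε => norm_nonneg _) hp1 hp2
  rw [Fintype.card_fun, Fintype.card_bool, Fintype.card_fin, Nat.cast_pow, Nat.cast_ofNat] at hjen
  have hB : ∑ ε : Fin N → Bool, ‖Z ε‖ ^ 2 = 2 ^ N * ∑ i, ‖v i‖ ^ 2 := P2 v Finset.univ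
  rw [hB] at hjen
  have e0 : ((2:ℝ) ^ N)⁻¹ * (2 ^ N * ∑ i, ‖v i‖ ^ 2) = ∑ i, ‖v i‖ ^ 2 := by field_simp
  rw [e0] at hjen
  have hsub : (∑ i, ‖v i‖ ^ 2 : ℝ) ^ (p / 2) ≤ ∑ i, ‖v i‖ ^ p := by
    have key := rpow_sum_le Finset.univ (fun i : Fin N => ‖v i‖ ^ 2)
      (fun i _ => sq_nonneg _) (by positivity : (0:ℝ) < p / 2) (by linarith)
    have e1 : ∀ i : Fin N, ((‖v i‖ : ℝ) ^ 2) ^ (p / 2) = ‖v i‖ ^ p := by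
      intro i
      rw [← Real.rpow_natCast ‖v i‖ 2, ← Real.rpow_mul (norm_nonneg _)]
      push_cast
      rw [show (2:ℝ) * (p / 2) = p by ring]
    rw [Finset.sum_congr rfl (fun i _ => e1 i)] at key
    exact key
  have := hjen.trans hsub
  calc ∑ ε : Fin N → Bool, ‖Z ε‖ ^ p
      = 2 ^ N * (((2:ℝ) ^ N)⁻¹ * ∑ ε : Fin N → Bool, ‖Z ε‖ ^ p) := by field_simp
    _ ≤ 2 ^ N * ∑ i, ‖v i‖ ^ p := by
        apply mul_le_mul_of_nonneg_left this h2N.le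

/-- power mean bound -/
lemma power_mean (v : Fin N → H) (hN : 0 < N) {p : ℝ} (hp1 : 1 ≤ p) (hp2 : p ≤ 2) :
    ∑ i, ‖v i‖ ^ p ≤ (N:ℝ) ^ (1 - p / 2) * (∑ i, ‖v i‖ ^ 2) ^ (p / 2) := by
  have hp0 : 0 < p := lt_of_lt_of_le one_pos hp1
  have hNpos : (0:ℝ) < (N:ℝ) := by exact_mod_cast hN
  haveI : Nonempty (Fin N) := Fin.pos_iff_nonempty.mp hN
  have hjen := jensen_rpow' (ι := Fin N) (fun i => ‖v i‖) (fun i => norm_nonneg _) hp1 hp2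
  rw [Fintype.card_fin] at hjen
  -- hjen : (N)⁻¹ * ∑ ‖v‖^p ≤ ((N)⁻¹ * ∑ ‖v‖^2) ^ (p/2)
  have e1 : ((N:ℝ)⁻¹ * ∑ i, ‖v i‖ ^ 2) ^ (p / 2)
      = (N:ℝ)⁻¹ ^ (p / 2) * (∑ i, ‖v i‖ ^ 2) ^ (p / 2) :=
    Real.mul_rpow (by positivity) (Finset.sum_nonneg fun i _ => sq_nonneg _)
  rw [e1] at hjen
  have key := mul_le_mul_of_nonneg_left hjen hNpos.le
  rw [← mul_assoc, ← mul_assoc, mul_inv_cancel₀ hNpos.ne', one_mul] at key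
  have e2 : (N:ℝ) * (N:ℝ)⁻¹ ^ (p / 2) = (N:ℝ) ^ (1 - p / 2) := by
    have h3 : ((N:ℝ)⁻¹) ^ (p / 2) = (N:ℝ) ^ (-(p / 2)) := by
      rw [← Real.rpow_neg_one (N:ℝ), ← Real.rpow_mul hNpos.le]
      norm_num
    rw [h3, show (1 - p / 2) = 1 + -(p / 2) by ring, Real.rpow_add hNpos, Real.rpow_one]
  rw [e2] at key
  simpa using key

end Moments2

section MT

lemma exp_le {α β C : ℝ} (hC : 0 < C)
    (h : ∀ N : ℕ, 1 ≤ N → (N:ℝ) ^ α ≤ C * (N:ℝ) ^ β) : α ≤ β := by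
  by_contra hlt
  push_neg at hlt
  set δ := α - β with hδ
  have hδ0 : 0 < δ := by simp [hδ]; linarith
  obtain ⟨N, hN⟩ := exists_nat_gt (max 1 (C ^ δ⁻¹))
  have hN1r : (1:ℝ) < (N:ℝ) := lt_of_le_of_lt (le_max_left _ _) hN
  have hN1 : 1 ≤ N := by exact_mod_cast hN1r.le
  have hNpos : (0:ℝ) < (N:ℝ) := by linarith
  have hCN : C < (N:ℝ) ^ δ := by
    have h1 : C ^ δ⁻¹ < (N:ℝ) := lt_of_le_of_lt (le_max_right _ _) hN
    have h2 : (C ^ δ⁻¹) ^ δ < (N:ℝ) ^ δ :=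
      Real.rpow_lt_rpow (Real.rpow_nonneg hC.le _) h1 hδ0
    rwa [Real.rpow_inv_rpow hC.le hδ0.ne'] at h2
  have hβ : (0:ℝ) < (N:ℝ) ^ β := Real.rpow_pos_of_pos hNpos β
  have := h N hN1
  have hcon : (N:ℝ) ^ α < (N:ℝ) ^ δ * (N:ℝ) ^ β := by
    calc (N:ℝ) ^ α ≤ C * (N:ℝ) ^ β := this
      _ < (N:ℝ) ^ δ * (N:ℝ) ^ β := by exact mul_lt_mul_of_pos_right hCN hβ
  rw [← Real.rpow_add hNpos, hδ] at hcon
  simp at hcon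

variable {α : Type*} [MeasurableSpace α] {μ : Measure α}
variable {E : Type*} [NormedAddCommGroup E]

lemma norm_rpow_eq_integral {P : ℝ≥0∞} [Fact (1 ≤ P)] (hP : P ≠ ∞) (h : Lp E P μ) :
    ‖h‖ ^ P.toReal = ∫ x, ‖h x‖ ^ P.toReal ∂μ := by
  have hP1 : 1 ≤ P := Fact.out
  have hP0 : P ≠ 0 := (lt_of_lt_of_le zero_lt_one hP1).ne'
  have hpt : 0 < P.toReal := ENNReal.toReal_pos hP0 hP
  have hmem : MemLp h P μ := Lp.memLp h
  have hint : 0 ≤ ∫ x, ‖h x‖ ^ P.toReal ∂μ :=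
    integral_nonneg fun x => Real.rpow_nonneg (norm_nonneg _) _
  rw [Lp.norm_def, MemLp.eLpNorm_eq_integral_rpow_norm hP0 hP hmem,
    ENNReal.toReal_ofReal (Real.rpow_nonneg hint _),
    Real.rpow_inv_rpow hint hpt.ne']

lemma integrable_norm_rpow_of_Lp {P : ℝ≥0∞} [Fact (1 ≤ P)] (hP : P ≠ ∞) (h : Lp E P μ) :
    Integrable (fun x => ‖h x‖ ^ P.toReal) μ := by
  have hP1 : 1 ≤ P := Fact.out
  have hP0 : P ≠ 0 := (lt_of_lt_of_le zero_lt_one hP1).ne'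
  exact (Lp.memLp h).integrable_norm_rpow hP0 hP

lemma coeFn_sum_smul [NormedSpace ℝ E] {ι : Type*} (s : Finset ι) (c : ι → ℝ)
    {P : ℝ≥0∞} [Fact (1 ≤ P)] (f : ι → Lp E P μ) :
    ⇑(∑ i ∈ s, c i • f i) =ᵐ[μ] fun x => ∑ i ∈ s, c i • ((f i : α → E) x) := by
  classical
  induction s using Finset.induction with
  | empty => simp only [Finset.sum_empty]; exact Lp.coeFn_zero E P μ
  | @insert a s ha ih =>
      rw [Finset.sum_insert ha]
      have h1 := Lp.coeFn_add (c a • f a) (∑ i ∈ s, c i • f i)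
      have h2 := Lp.coeFn_smul (c a) (f a)
      filter_upwards [h1, h2, ih] with x hx1 hx2 hx3
      rw [Finset.sum_insert ha]
      simp only [Pi.add_apply] at hx1
      rw [hx1, hx2, hx3]
      simp


end MT

section Boxes

variable {n : ℕ}

def box (hn : 1 ≤ n) (i : ℕ) : Set (Fin n → ℝ) :=
  Set.univ.pi fun j => if j = (⟨0, hn⟩ : Fin n) then Set.Ico (i:ℝ) (i+1) else Set.Ico 0 1

lemma measurableSet_box (hn : 1 ≤ n) (i : ℕ) : MeasurableSet (box hn i) :=
  MeasurableSet.univ_pi fun j => by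
    by_cases h : j = (⟨0, hn⟩ : Fin n) <;> simp [h, measurableSet_Ico]

lemma volume_box (hn : 1 ≤ n) (i : ℕ) : volume (box hn i) = 1 := by
  rw [box, volume_pi_pi]
  have : ∀ j : Fin n,
      volume (if j = (⟨0, hn⟩ : Fin n) then Set.Ico (i:ℝ) (i+1) else Set.Ico 0 1) = 1 := by
    intro j
    by_cases h : j = (⟨0, hn⟩ : Fin n) <;> simp [h, Real.volume_Ico]
  simp [this]

lemma disjoint_box (hn : 1 ≤ n) {i k : ℕ} (hik : i ≠ k) :
    Disjoint (box hn i) (box hn k) := by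
  rw [Set.disjoint_left]
  intro x hxi hxk
  have h1 := hxi (⟨0, hn⟩ : Fin n) (Set.mem_univ _)
  have h2 := hxk (⟨0, hn⟩ : Fin n) (Set.mem_univ _)
  simp only [if_pos rfl, Set.mem_Ico] at h1 h2
  have hik1 : (i:ℝ) < k + 1 := lt_of_le_of_lt h1.1 h2.2
  have hik2 : (k:ℝ) < i + 1 := lt_of_le_of_lt h2.1 h1.2
  have : i < k + 1 := by exact_mod_cast hik1
  have : k < i + 1 := by exact_mod_cast hik2
  omega

variable {q : ℝ}

noncomputable def bf (hn : 1 ≤ n) (q : ℝ) {N : ℕ} (i : Fin N) :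
    Lp ℝ (ENNReal.ofReal q) (volume : Measure (Fin n → ℝ)) :=
  indicatorConstLp _ (measurableSet_box hn i.val)
    (by rw [volume_box]; exact ENNReal.one_ne_top) (1:ℝ)

lemma norm_bf (hn : 1 ≤ n) (hq1 : 1 ≤ q) {N : ℕ} (i : Fin N) : ‖bf hn q i‖ = 1 := by
  rw [bf, norm_indicatorConstLp]
  · rw [measureReal_def, volume_box]
    simp
  · simp only [ne_eq, ENNReal.ofReal_eq_zero, not_le]; linarith
  · exact ENNReal.ofReal_ne_top

lemma sum_indicator_pointwise (hn : 1 ≤ n) (hq1 : 1 ≤ q) {N : ℕ} (ε : Fin N → Bool)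
    (x : Fin n → ℝ) :
    ‖∑ i : Fin N, sgn (ε i) • ((box hn i.val).indicator (fun _ => (1:ℝ)) x)‖ ^ q
      = ∑ i : Fin N, (box hn i.val).indicator (fun _ => (1:ℝ)) x := by
  have hq0 : q ≠ 0 := by linarith
  by_cases hx : ∃ j : Fin N, x ∈ box hn j.val
  · obtain ⟨j, hj⟩ := hx
    have hzero : ∀ i : Fin N, i ≠ j → (box hn i.val).indicator (fun _ => (1:ℝ)) x = 0 := by
      intro i hij
      apply Set.indicator_of_notMem
      intro hxi
      exact Set.disjoint_left.1 (disjoint_box hn (fun h => hij (Fin.val_injective h))) hxi hj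
    have e1 : ∑ i : Fin N, sgn (ε i) • ((box hn i.val).indicator (fun _ => (1:ℝ)) x)
        = sgn (ε j) := by
      rw [Finset.sum_eq_single j]
      · rw [Set.indicator_of_mem hj]; simp
      · intro i _ hij; rw [hzero i hij]; simp
      · intro h; exact absurd (Finset.mem_univ j) h
    have e2 : ∑ i : Fin N, (box hn i.val).indicator (fun _ => (1:ℝ)) x = 1 := by
      rw [Finset.sum_eq_single j]
      · rw [Set.indicator_of_mem hj]
      · intro i _ hij; exact hzero i hij
      · intro h; exact absurd (Finset.mem_univ j) h
    rw [e1, e2]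
    have : ‖sgn (ε j)‖ = 1 := by cases (ε j) <;> simp [sgn]
    rw [this, Real.one_rpow]
  · push_neg at hx
    have hzero : ∀ i : Fin N, (box hn i.val).indicator (fun _ => (1:ℝ)) x = 0 :=
      fun i => Set.indicator_of_notMem (hx i) _
    simp only [hzero, smul_zero, Finset.sum_const_zero, norm_zero]
    rw [Real.zero_rpow hq0]



end Boxes

section NormBfSum
variable {n : ℕ} {q : ℝ}

lemma norm_bf_sum (hn : 1 ≤ n) (hq1 : 1 ≤ q) [Fact (1 ≤ ENNReal.ofReal q)] {N : ℕ}
    (ε : Fin N → Bool) :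
    ‖∑ i : Fin N, sgn (ε i) • bf hn q i‖ ^ q = (N:ℝ) := by
  have hqt : (ENNReal.ofReal q).toReal = q := ENNReal.toReal_ofReal (by linarith)
  have key := norm_rpow_eq_integral (E := ℝ) ENNReal.ofReal_ne_top
    (∑ i : Fin N, sgn (ε i) • bf hn q i)
  rw [hqt] at key
  rw [key]
  have hae1 := coeFn_sum_smul (μ := (volume : Measure (Fin n → ℝ))) Finset.univ
    (fun i : Fin N => sgn (ε i)) (bf hn q)
  have hae2 : ∀ᵐ x ∂(volume : Measure (Fin n → ℝ)), ∀ i : Fin N,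
      (bf hn q i : (Fin n → ℝ) → ℝ) x = (box hn i.val).indicator (fun _ => (1:ℝ)) x := by
    rw [ae_all_iff]
    intro i
    exact indicatorConstLp_coeFn
  have hae : (fun x => ‖(∑ i : Fin N, sgn (ε i) • bf hn q i :
        Lp ℝ (ENNReal.ofReal q) (volume : Measure (Fin n → ℝ))) x‖ ^ q)
      =ᵐ[(volume : Measure (Fin n → ℝ))]
        fun x => ∑ i : Fin N, (box hn i.val).indicator (fun _ => (1:ℝ)) x := by
    filter_upwards [hae1, hae2] with x hx1 hx2
    have e0 : ∑ i : Fin N, sgn (ε i) • ((bf hn q i : (Fin n → ℝ) → ℝ) x)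
        = ∑ i : Fin N, sgn (ε i) • ((box hn i.val).indicator (fun _ => (1:ℝ)) x) :=
      Finset.sum_congr rfl fun i _ => by rw [hx2 i]
    calc ‖(∑ i : Fin N, sgn (ε i) • bf hn q i :
          Lp ℝ (ENNReal.ofReal q) (volume : Measure (Fin n → ℝ))) x‖ ^ q
        = ‖∑ i : Fin N, sgn (ε i) • ((box hn i.val).indicator (fun _ => (1:ℝ)) x)‖ ^ q := by
          rw [hx1, e0]
      _ = ∑ i : Fin N, (box hn i.val).indicator (fun _ => (1:ℝ)) x :=
          sum_indicator_pointwise hn hq1 ε x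
  rw [integral_congr_ae hae, integral_finset_sum]
  · rw [Finset.sum_congr rfl
      (fun (i : Fin N) _ => integral_indicator_const (1:ℝ) (measurableSet_box hn i.val))]
    simp [measureReal_def, volume_box]
  · intro i _
    rw [integrable_indicator_iff (measurableSet_box hn i.val)]
    apply (integrableOn_const_iff (by simp)).2
    right
    rw [volume_box]
    exact ENNReal.one_lt_top

end NormBfSum

end EmbedAux


open EmbedAux

/-- **Lemma 4.5**: if `L^q(ℝⁿ)` embeds isomorphically into the Bochner space
`L^p(ℝⁿ; H)` with `H` a nontrivial Hilbert space and `p ∈ [1,2]`, `q ∈ [1,∞)`,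
then `1 ≤ p ≤ q ≤ 2`. -/
theorem embedding_Lq_into_LpH_exponent_range
    (H : Type*) [NormedAddCommGroup H] [InnerProductSpace ℝ H]
    [CompleteSpace H] [Nontrivial H]
    (n : ℕ) (hn : 1 ≤ n) (p q : ℝ)
    (hp1 : 1 ≤ p) (hp2 : p ≤ 2) (hq1 : 1 ≤ q)
    [Fact (1 ≤ ENNReal.ofReal p)] [Fact (1 ≤ ENNReal.ofReal q)]
    (ι : Lp ℝ (ENNReal.ofReal q) (volume : Measure (Fin n → ℝ)) →L[ℝ]
         Lp H (ENNReal.ofReal p) (volume : Measure (Fin n → ℝ)))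
    (c : ℝ) (hc : 0 < c)
    (hbelow : ∀ f : Lp ℝ (ENNReal.ofReal q) (volume : Measure (Fin n → ℝ)),
      c * ‖f‖ ≤ ‖ι f‖) :
    p ≤ q ∧ q ≤ 2 := by
  classical
  have hq0 : 0 < q := lt_of_lt_of_le one_pos hq1
  have hp0 : 0 < p := lt_of_lt_of_le one_pos hp1
  have hpt : (ENNReal.ofReal p).toReal = p := ENNReal.toReal_ofReal hp0.le
  have hqt : (ENNReal.ofReal q).toReal = q := ENNReal.toReal_ofReal hq0.le
  set a := ‖ι‖ with ha
  have ha0 : 0 < a := by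
    have h1 := hbelow (bf hn q (0 : Fin 1))
    have h2 : ‖ι (bf hn q (0 : Fin 1))‖ ≤ a * ‖bf hn q (0 : Fin 1)‖ := ι.le_opNorm _
    rw [norm_bf hn hq1] at h1 h2
    nlinarith [hc]
  have main : ∀ N : ℕ, 1 ≤ N →
      (c ^ p * (N:ℝ) ^ (q⁻¹ * p) ≤ a ^ p * (N:ℝ) ∧
       (N:ℝ) * c ^ p ≤ 3 * a ^ p * ((N:ℝ) ^ (1 - p/2) * (N:ℝ) ^ (q⁻¹ * p))) := by
    intro N hN
    set f : Fin N → Lp ℝ (ENNReal.ofReal q) (volume : Measure (Fin n → ℝ)) := bf hn q with hf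
    set g : Fin N → Lp H (ENNReal.ofReal p) (volume : Measure (Fin n → ℝ)) :=
      fun i => ι (f i) with hg
    set F : (Fin N → Bool) → Lp ℝ (ENNReal.ofReal q) (volume : Measure (Fin n → ℝ)) :=
      fun ε => ∑ i, sgn (ε i) • f i with hF
    have hFnorm : ∀ ε, ‖F ε‖ = (N:ℝ) ^ q⁻¹ := by
      intro ε
      have h1 : ‖F ε‖ ^ q = (N:ℝ) := norm_bf_sum hn hq1 ε
      have h2 := Real.rpow_rpow_inv (norm_nonneg (F ε)) (by linarith : q ≠ 0)
      rw [← h2, h1]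
    have hGsum : ∀ ε, ι (F ε) = ∑ i, sgn (ε i) • g i := by
      intro ε
      rw [hF]
      simp only [map_sum, _root_.map_smul]
      rfl
    have hIG : ∀ ε : Fin N → Bool, ‖ι (F ε)‖ ^ p
        = ∫ x, ‖∑ i, sgn (ε i) • ((g i : (Fin n → ℝ) → H) x)‖ ^ p ∂volume := by
      intro ε
      have k := norm_rpow_eq_integral ENNReal.ofReal_ne_top (ι (F ε))
      rw [hpt] at k
      rw [k, hGsum ε]
      refine integral_congr_ae ?_
      filter_upwards [coeFn_sum_smul Finset.univ (fun i : Fin N => sgn (ε i)) g] with x hx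
      rw [hx]
    have IntZ : ∀ ε : Fin N → Bool, Integrable
        (fun x => ‖∑ i, sgn (ε i) • ((g i : (Fin n → ℝ) → H) x)‖ ^ p) volume := by
      intro ε
      have base := integrable_norm_rpow_of_Lp ENNReal.ofReal_ne_top (∑ i, sgn (ε i) • g i)
      rw [hpt] at base
      apply base.congr
      filter_upwards [coeFn_sum_smul Finset.univ (fun i : Fin N => sgn (ε i)) g] with x hx
      rw [hx]
    have Intg : ∀ i : Fin N, Integrable
        (fun x => ‖(g i : (Fin n → ℝ) → H) x‖ ^ p) volume := by
      intro i
      have base := integrable_norm_rpow_of_Lp ENNReal.ofReal_ne_top (g i)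
      rwa [hpt] at base
    have hgnorm_int : ∀ i : Fin N,
        ∫ x, ‖(g i : (Fin n → ℝ) → H) x‖ ^ p ∂volume = ‖g i‖ ^ p := by
      intro i
      have k := norm_rpow_eq_integral ENNReal.ofReal_ne_top (g i)
      rw [hpt] at k
      exact k.symm
    have hg_le : ∀ i : Fin N, ‖g i‖ ≤ a := by
      intro i
      have h2 := ι.le_opNorm (f i)
      rwa [norm_bf hn hq1, mul_one] at h2
    have hg_ge : ∀ i : Fin N, c ≤ ‖g i‖ := by
      intro i
      have h2 := hbelow (f i)
      rwa [norm_bf hn hq1, mul_one] at h2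
    have hGF_le : ∀ ε, ‖ι (F ε)‖ ≤ a * (N:ℝ) ^ q⁻¹ := by
      intro ε
      have h2 := ι.le_opNorm (F ε)
      rwa [hFnorm ε] at h2
    have hGF_ge : ∀ ε, c * (N:ℝ) ^ q⁻¹ ≤ ‖ι (F ε)‖ := by
      intro ε
      have h2 := hbelow (F ε)
      rwa [hFnorm ε] at h2
    have hNr : (0:ℝ) ≤ (N:ℝ) := Nat.cast_nonneg N
    have hNq : (0:ℝ) ≤ (N:ℝ) ^ q⁻¹ := Real.rpow_nonneg hNr _
    have hrpow_split : ((N:ℝ) ^ q⁻¹) ^ p = (N:ℝ) ^ (q⁻¹ * p) := (Real.rpow_mul hNr _ _).symm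
    -- part 1
    have sum_bound : ∑ ε : Fin N → Bool, ‖ι (F ε)‖ ^ p
        ≤ ∑ _ε : Fin N → Bool, (N:ℝ) * a ^ p := by
      calc ∑ ε : Fin N → Bool, ‖ι (F ε)‖ ^ p
          = ∑ ε : Fin N → Bool,
              ∫ x, ‖∑ i, sgn (ε i) • ((g i : (Fin n → ℝ) → H) x)‖ ^ p ∂volume :=
            Finset.sum_congr rfl fun ε _ => hIG ε
        _ = ∫ x, ∑ ε : Fin N → Bool,
              ‖∑ i, sgn (ε i) • ((g i : (Fin n → ℝ) → H) x)‖ ^ p ∂volume :=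
            (integral_finset_sum _ fun ε _ => IntZ ε).symm
        _ ≤ ∫ x, (2:ℝ) ^ N * ∑ i, ‖(g i : (Fin n → ℝ) → H) x‖ ^ p ∂volume := by
            apply integral_mono (integrable_finset_sum _ fun ε _ => IntZ ε)
              ((integrable_finset_sum _ fun i _ => Intg i).const_mul _)
            intro x
            exact type_upper (fun i => (g i : (Fin n → ℝ) → H) x) hp1 hp2
        _ = 2 ^ N * ∑ i, ‖g i‖ ^ p := by
            rw [integral_const_mul, integral_finset_sum _ fun i _ => Intg i,
              Finset.sum_congr rfl fun i _ => hgnorm_int i]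
        _ ≤ 2 ^ N * ((N:ℝ) * a ^ p) := by
            apply mul_le_mul_of_nonneg_left _ (by positivity)
            calc ∑ i : Fin N, ‖g i‖ ^ p ≤ ∑ _i : Fin N, a ^ p :=
                  Finset.sum_le_sum fun i _ =>
                    Real.rpow_le_rpow (norm_nonneg _) (hg_le i) hp0.le
              _ = (N:ℝ) * a ^ p := by
                  rw [Finset.sum_const]
                  simp [nsmul_eq_mul]
        _ = ∑ _ε : Fin N → Bool, (N:ℝ) * a ^ p := by
            rw [Finset.sum_const, card_E, nsmul_eq_mul]
            push_cast
            ring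
    obtain ⟨ε₀, -, hε₀⟩ := Finset.exists_le_of_sum_le Finset.univ_nonempty sum_bound
    have part1 : c ^ p * (N:ℝ) ^ (q⁻¹ * p) ≤ a ^ p * (N:ℝ) := by
      have l1 : (c * (N:ℝ) ^ q⁻¹) ^ p ≤ ‖ι (F ε₀)‖ ^ p :=
        Real.rpow_le_rpow (by positivity) (hGF_ge ε₀) hp0.le
      have l2 : (c * (N:ℝ) ^ q⁻¹) ^ p = c ^ p * (N:ℝ) ^ (q⁻¹ * p) := by
        rw [Real.mul_rpow hc.le hNq, hrpow_split]
      calc c ^ p * (N:ℝ) ^ (q⁻¹ * p) = (c * (N:ℝ) ^ q⁻¹) ^ p := l2.symm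
        _ ≤ ‖ι (F ε₀)‖ ^ p := l1
        _ ≤ (N:ℝ) * a ^ p := hε₀
        _ = a ^ p * (N:ℝ) := by ring
    -- part 2
    have upper_each : ∀ ε, ‖ι (F ε)‖ ^ p ≤ a ^ p * (N:ℝ) ^ (q⁻¹ * p) := by
      intro ε
      have l1 : ‖ι (F ε)‖ ^ p ≤ (a * (N:ℝ) ^ q⁻¹) ^ p :=
        Real.rpow_le_rpow (norm_nonneg _) (hGF_le ε) hp0.le
      rwa [Real.mul_rpow ha0.le hNq, hrpow_split] at l1
    have part2 : (N:ℝ) * c ^ p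
        ≤ 3 * a ^ p * ((N:ℝ) ^ (1 - p/2) * (N:ℝ) ^ (q⁻¹ * p)) := by
      have hNpos : 0 < N := hN
      have lower : (N:ℝ) * c ^ p ≤ ∑ i : Fin N, ‖g i‖ ^ p := by
        calc (N:ℝ) * c ^ p = ∑ _i : Fin N, c ^ p := by
              rw [Finset.sum_const]; simp [nsmul_eq_mul]
          _ ≤ ∑ i : Fin N, ‖g i‖ ^ p := Finset.sum_le_sum fun i _ =>
              Real.rpow_le_rpow hc.le (hg_ge i) hp0.le
      have mid : ∑ i : Fin N, ‖g i‖ ^ p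
          ≤ (N:ℝ) ^ (1 - p/2) * (3 * ((2:ℝ) ^ N)⁻¹ *
              ∑ ε : Fin N → Bool, ‖ι (F ε)‖ ^ p) := by
        calc ∑ i : Fin N, ‖g i‖ ^ p
            = ∫ x, ∑ i, ‖(g i : (Fin n → ℝ) → H) x‖ ^ p ∂volume := by
              rw [integral_finset_sum _ fun i _ => Intg i,
                Finset.sum_congr rfl fun i _ => hgnorm_int i]
          _ ≤ ∫ x, (N:ℝ) ^ (1 - p/2) * (3 * ((2:ℝ) ^ N)⁻¹ *
                ∑ ε : Fin N → Bool,
                  ‖∑ i, sgn (ε i) • ((g i : (Fin n → ℝ) → H) x)‖ ^ p) ∂volume := by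
              apply integral_mono (integrable_finset_sum _ fun i _ => Intg i)
                (((integrable_finset_sum _ fun ε _ => IntZ ε).const_mul _).const_mul _)
              intro x
              have h1 := power_mean (fun i => (g i : (Fin n → ℝ) → H) x) hNpos hp1 hp2
              have h2 := kahane_low (fun i => (g i : (Fin n → ℝ) → H) x) hp1 hp2
              exact h1.trans (mul_le_mul_of_nonneg_left h2 (Real.rpow_nonneg hNr _))
          _ = (N:ℝ) ^ (1 - p/2) * (3 * ((2:ℝ) ^ N)⁻¹ *
                ∑ ε : Fin N → Bool, ‖ι (F ε)‖ ^ p) := by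
              rw [integral_const_mul, integral_const_mul,
                integral_finset_sum _ fun ε _ => IntZ ε,
                Finset.sum_congr rfl fun ε _ => (hIG ε).symm]
      have upper : ∑ ε : Fin N → Bool, ‖ι (F ε)‖ ^ p
          ≤ 2 ^ N * (a ^ p * (N:ℝ) ^ (q⁻¹ * p)) := by
        calc ∑ ε : Fin N → Bool, ‖ι (F ε)‖ ^ p
            ≤ ∑ _ε : Fin N → Bool, a ^ p * (N:ℝ) ^ (q⁻¹ * p) :=
              Finset.sum_le_sum fun ε _ => upper_each ε
          _ = 2 ^ N * (a ^ p * (N:ℝ) ^ (q⁻¹ * p)) := by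
              rw [Finset.sum_const, card_E, nsmul_eq_mul]
              push_cast
              ring
      have h2N : (0:ℝ) < 2 ^ N := by positivity
      have hfinal : (N:ℝ) * c ^ p ≤ (N:ℝ) ^ (1 - p/2) * (3 * ((2:ℝ) ^ N)⁻¹ *
          (2 ^ N * (a ^ p * (N:ℝ) ^ (q⁻¹ * p)))) := by
        apply (lower.trans mid).trans
        apply mul_le_mul_of_nonneg_left _ (Real.rpow_nonneg hNr _)
        apply mul_le_mul_of_nonneg_left upper (by positivity)
      calc (N:ℝ) * c ^ p ≤ (N:ℝ) ^ (1 - p/2) * (3 * ((2:ℝ) ^ N)⁻¹ *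
              (2 ^ N * (a ^ p * (N:ℝ) ^ (q⁻¹ * p)))) := hfinal
        _ = 3 * a ^ p * ((N:ℝ) ^ (1 - p/2) * (N:ℝ) ^ (q⁻¹ * p)) := by
            field_simp
    exact ⟨part1, part2⟩
  have hcp : 0 < c ^ p := Real.rpow_pos_of_pos hc p
  have hap : 0 < a ^ p := Real.rpow_pos_of_pos ha0 p
  constructor
  · -- p ≤ q
    have key : ∀ N : ℕ, 1 ≤ N →
        (N:ℝ) ^ (q⁻¹ * p) ≤ (a ^ p / c ^ p) * (N:ℝ) ^ (1:ℝ) := by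
      intro N hN
      have h := (main N hN).1
      rw [Real.rpow_one, div_mul_eq_mul_div, le_div_iff₀ hcp]
      calc (N:ℝ) ^ (q⁻¹ * p) * c ^ p = c ^ p * (N:ℝ) ^ (q⁻¹ * p) := by ring
        _ ≤ a ^ p * (N:ℝ) := h
    have hle := exp_le (div_pos hap hcp) key
    -- q⁻¹ * p ≤ 1 ⇒ p ≤ q
    have h2 := mul_le_mul_of_nonneg_left hle hq0.le
    rw [mul_one] at h2
    have h3 : q * (q⁻¹ * p) = p := by field_simp
    linarith [h3 ▸ h2]
  · -- q ≤ 2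
    have key : ∀ N : ℕ, 1 ≤ N →
        (N:ℝ) ^ (1:ℝ) ≤ (3 * a ^ p / c ^ p) * (N:ℝ) ^ (1 - p/2 + q⁻¹ * p) := by
      intro N hN
      have h := (main N hN).2
      have hNpos : (0:ℝ) < (N:ℝ) := by exact_mod_cast hN
      rw [Real.rpow_one, div_mul_eq_mul_div, le_div_iff₀ hcp]
      have e1 : (N:ℝ) ^ (1 - p/2 + q⁻¹ * p) = (N:ℝ) ^ (1 - p/2) * (N:ℝ) ^ (q⁻¹ * p) :=
        Real.rpow_add hNpos _ _
      calc (N:ℝ) * c ^ p ≤ 3 * a ^ p * ((N:ℝ) ^ (1 - p/2) * (N:ℝ) ^ (q⁻¹ * p)) := h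
        _ = 3 * a ^ p * (N:ℝ) ^ (1 - p/2 + q⁻¹ * p) := by rw [e1]
    have hle := exp_le (div_pos (by linarith : (0:ℝ) < 3 * a ^ p) hcp) key
    -- 1 ≤ 1 - p/2 + q⁻¹ * p ⇒ q ≤ 2
    have h1 : p / 2 ≤ q⁻¹ * p := by linarith
    have h2 := mul_le_mul_of_nonneg_left h1 hq0.le
    have h3 : q * (q⁻¹ * p) = p := by field_simp
    rw [h3] at h2
    nlinarith [hp0, hq0]
end
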